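/- arXiv:2406.12600 — 5 statements merged into one kernel-verified Lean document; each statement's English description precedes it below -/
import Mathlib

section
/- Blocking concentration inequality: let (ℱ_t)_{t∈ℕ} be a filtration (with ℱ_t trivial for t ≤ 0), let d, K ≥ 1 and n = K·d, and let X_1,…,X_n be real random variables such that each X_t is ℱ_t-measurable, |X_t| ≤ 1 almost surely, and E[X_t | ℱ_{t−d}] ≤ φ almost surely for some φ ≥ 0. Then for every δ ∈ (0,1), with probability at least 1 − δ, (1/n)·Σ_{t=1}^n X_t ≤ φ + √(2 d log(1/δ)/n). -/
set_option autoImplicit false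

open MeasureTheory

lemma my_sinh_le {x : ℝ} (hx : 0 ≤ x) : Real.sinh x ≤ x * Real.cosh x := by
  have hmono : MonotoneOn (fun y => y * Real.cosh y - Real.sinh y) (Set.Ici 0) := by
    apply monotoneOn_of_deriv_nonneg (convex_Ici 0)
    · exact ((continuous_id.mul Real.continuous_cosh).sub Real.continuous_sinh).continuousOn
    · intro y _
      exact (((differentiable_id.mul Real.differentiable_cosh).sub
        Real.differentiable_sinh) y).differentiableWithinAt
    · intro y hy
      rw [interior_Ici] at hy
      have hd : HasDerivAt (fun y => y * Real.cosh y - Real.sinh y) (y * Real.sinh y) y := by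
        have h1 := ((hasDerivAt_id y).mul (Real.hasDerivAt_cosh y)).sub (Real.hasDerivAt_sinh y)
        refine h1.congr_deriv ?_
        simp only [id]; ring
      rw [hd.deriv]
      exact mul_nonneg hy.le ((Real.sinh_nonneg_iff.2 hy.le))
  have := hmono Set.self_mem_Ici hx hx
  simpa using this

lemma my_exp_le {y : ℝ} (ν : ℝ) (hy : |y| ≤ 1) :
    Real.exp (ν * y) ≤ Real.cosh ν + y * Real.sinh ν := by
  obtain ⟨h1, h2⟩ := abs_le.1 hy
  have ha : (0:ℝ) ≤ (1 - y) / 2 := by linarith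
  have hb : (0:ℝ) ≤ (1 + y) / 2 := by linarith
  have hab : (1 - y) / 2 + (1 + y) / 2 = 1 := by ring
  have hc := convexOn_exp.2 (Set.mem_univ (-ν)) (Set.mem_univ ν) ha hb hab
  simp only [smul_eq_mul] at hc
  have he : (1 - y) / 2 * (-ν) + (1 + y) / 2 * ν = ν * y := by ring
  rw [he] at hc
  rw [Real.cosh_eq, Real.sinh_eq]
  have : (1 - y) / 2 * Real.exp (-ν) + (1 + y) / 2 * Real.exp ν
      = (Real.exp ν + Real.exp (-ν)) / 2 + y * ((Real.exp ν - Real.exp (-ν)) / 2) := by ring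
  linarith [hc, this.le, this.ge]

lemma my_scalar {ν φ : ℝ} (hν : 0 ≤ ν) (hφ : 0 ≤ φ) :
    Real.cosh ν + φ * Real.sinh ν ≤ Real.exp (ν * φ + ν ^ 2 / 2) := by
  have h1 : Real.sinh ν ≤ ν * Real.cosh ν := my_sinh_le hν
  have h2 : Real.cosh ν ≤ Real.exp (ν ^ 2 / 2) := Real.cosh_le_exp_half_sq ν
  have h3 : ν * φ + 1 ≤ Real.exp (ν * φ) := Real.add_one_le_exp _
  have hcosh : (0:ℝ) < Real.cosh ν := Real.cosh_pos ν
  calc Real.cosh ν + φ * Real.sinh ν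
      ≤ Real.cosh ν * (1 + ν * φ) := by nlinarith
    _ ≤ Real.exp (ν ^ 2 / 2) * Real.exp (ν * φ) := by nlinarith [Real.exp_pos (ν * φ)]
    _ = Real.exp (ν * φ + ν ^ 2 / 2) := by rw [← Real.exp_add]; ring_nf

lemma step_bound {Ω : Type*} [mΩ : MeasurableSpace Ω] (ℙ : Measure Ω) [IsProbabilityMeasure ℙ]
    (G : MeasurableSpace Ω) (hG : G ≤ mΩ)
    (Y : Ω → ℝ) (hY : Measurable[mΩ] Y) (hYb : ∀ᵐ ω ∂ℙ, |Y ω| ≤ 1)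
    (φ : ℝ) (hφ : 0 ≤ φ) (hc : ℙ[Y|G] ≤ᵐ[ℙ] fun _ => φ)
    (ν : ℝ) (hν : 0 ≤ ν)
    (f : Ω → ℝ) (hf : StronglyMeasurable[G] f) (hf0 : ∀ ω, 0 ≤ f ω)
    (C : ℝ) (hfC : ∀ᵐ ω ∂ℙ, f ω ≤ C) :
    ∫ ω, f ω * Real.exp (ν * Y ω) ∂ℙ
      ≤ Real.exp (ν * φ + ν ^ 2 / 2) * ∫ ω, f ω ∂ℙ := by
  have hfm : AEStronglyMeasurable[mΩ] f ℙ := (hf.mono hG).aestronglyMeasurable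
  have hfi : Integrable f ℙ := by
    refine Integrable.mono' (integrable_const C) hfm ?_
    filter_upwards [hfC] with ω h
    rwa [Real.norm_eq_abs, abs_of_nonneg (hf0 ω)]
  have hYm : AEStronglyMeasurable[mΩ] Y ℙ := hY.aestronglyMeasurable
  have hEm : AEStronglyMeasurable[mΩ] (fun ω => Real.exp (ν * Y ω)) ℙ :=
    ((hY.const_mul ν).exp).aestronglyMeasurable
  have hYi : Integrable Y ℙ := by
    refine Integrable.mono' (integrable_const 1) hYm ?_
    filter_upwards [hYb] with ω h using h
  have hfY : Integrable (f * Y) ℙ := by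
    refine Integrable.mono' (integrable_const C) (hfm.mul hYm) ?_
    filter_upwards [hfC, hYb] with ω h1 h2
    calc ‖f ω * Y ω‖ = f ω * |Y ω| := by
          rw [norm_mul, Real.norm_eq_abs, Real.norm_eq_abs, abs_of_nonneg (hf0 ω)]
      _ ≤ C * 1 := mul_le_mul h1 h2 (abs_nonneg _) ((hf0 ω).trans h1)
      _ = C := mul_one C
  have hfe : Integrable (fun ω => f ω * Real.exp (ν * Y ω)) ℙ := by
    refine Integrable.mono' (integrable_const (C * Real.exp ν))
      (hfm.mul hEm) ?_
    filter_upwards [hfC, hYb] with ω h1 h2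
    have hE : Real.exp (ν * Y ω) ≤ Real.exp ν := by
      apply Real.exp_le_exp.2
      nlinarith [abs_le.1 h2]
    rw [Real.norm_eq_abs, abs_of_nonneg (mul_nonneg (hf0 ω) (Real.exp_pos _).le)]
    exact mul_le_mul h1 hE (Real.exp_pos _).le ((hf0 ω).trans h1)
  have hfYi : Integrable (fun ω => f ω * Y ω) ℙ := hfY
  -- step 1: pointwise bound
  have step1 : ∫ ω, f ω * Real.exp (ν * Y ω) ∂ℙ
      ≤ ∫ ω, (Real.cosh ν * f ω + Real.sinh ν * (f ω * Y ω)) ∂ℙ := by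
    refine integral_mono_ae hfe ?_ ?_
    · exact (hfi.const_mul _).add (hfYi.const_mul _)
    · filter_upwards [hYb] with ω h
      nlinarith [mul_le_mul_of_nonneg_left (my_exp_le ν h) (hf0 ω)]
  -- rewrite the RHS
  have step2 : ∫ ω, (Real.cosh ν * f ω + Real.sinh ν * (f ω * Y ω)) ∂ℙ
      = Real.cosh ν * ∫ ω, f ω ∂ℙ + Real.sinh ν * ∫ ω, f ω * Y ω ∂ℙ := by
    rw [integral_add (hfi.const_mul _) (hfYi.const_mul _), integral_const_mul,
      integral_const_mul]
  -- step 3: conditional expectation bound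
  have hmul : ℙ[f * Y|G] =ᵐ[ℙ] f * ℙ[Y|G] := condExp_mul_of_stronglyMeasurable_left hf hfY hYi
  have step3 : ∫ ω, f ω * Y ω ∂ℙ ≤ φ * ∫ ω, f ω ∂ℙ := by
    have e1 : ∫ ω, f ω * Y ω ∂ℙ = ∫ ω, (ℙ[f * Y|G]) ω ∂ℙ := (integral_condExp hG).symm
    have e2 : ∫ ω, (ℙ[f * Y|G]) ω ∂ℙ = ∫ ω, f ω * (ℙ[Y|G]) ω ∂ℙ := integral_congr_ae hmul
    have hint1 : Integrable (fun ω => f ω * (ℙ[Y|G]) ω) ℙ := by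
      refine Integrable.mono' ((integrable_condExp (m := G) (f := Y)).norm.const_mul C)
        (hfm.mul (stronglyMeasurable_condExp.mono hG).aestronglyMeasurable) ?_
      filter_upwards [hfC] with ω h1
      rw [norm_mul, Real.norm_eq_abs (f ω), abs_of_nonneg (hf0 ω)]
      exact mul_le_mul_of_nonneg_right h1 (norm_nonneg _)
    have e3 : ∫ ω, f ω * (ℙ[Y|G]) ω ∂ℙ ≤ ∫ ω, f ω * φ ∂ℙ := by
      refine integral_mono_ae hint1 (hfi.mul_const φ) ?_
      filter_upwards [hc] with ω h
      exact mul_le_mul_of_nonneg_left h (hf0 ω)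
    rw [e1, e2]
    calc ∫ ω, f ω * (ℙ[Y|G]) ω ∂ℙ ≤ ∫ ω, f ω * φ ∂ℙ := e3
      _ = φ * ∫ ω, f ω ∂ℙ := by rw [integral_mul_const]; ring
  have hint_nonneg : 0 ≤ ∫ ω, f ω ∂ℙ := integral_nonneg hf0
  have hsinh : 0 ≤ Real.sinh ν := Real.sinh_nonneg_iff.2 hν
  calc ∫ ω, f ω * Real.exp (ν * Y ω) ∂ℙ
      ≤ Real.cosh ν * ∫ ω, f ω ∂ℙ + Real.sinh ν * ∫ ω, f ω * Y ω ∂ℙ := by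
        rw [← step2]; exact step1
    _ ≤ Real.cosh ν * ∫ ω, f ω ∂ℙ + Real.sinh ν * (φ * ∫ ω, f ω ∂ℙ) :=
        add_le_add_right (mul_le_mul_of_nonneg_left step3 hsinh) _
    _ = (Real.cosh ν + φ * Real.sinh ν) * ∫ ω, f ω ∂ℙ := by ring
    _ ≤ Real.exp (ν * φ + ν ^ 2 / 2) * ∫ ω, f ω ∂ℙ :=
        mul_le_mul_of_nonneg_right (my_scalar hν hφ) hint_nonneg

lemma class_bound {Ω : Type*} [mΩ : MeasurableSpace Ω] (ℙ : Measure Ω) [IsProbabilityMeasure ℙ]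
    (ℱ : Filtration ℕ mΩ) (d n : ℕ) (hd : 1 ≤ d) (X : ℕ → Ω → ℝ)
    (hXmeas : ∀ t, 1 ≤ t → t ≤ n → Measurable[ℱ t] (X t))
    (hXbdd : ∀ t, 1 ≤ t → t ≤ n → ∀ᵐ ω ∂ℙ, |X t ω| ≤ 1)
    (φ : ℝ) (hφ : 0 ≤ φ)
    (hcond : ∀ t, 1 ≤ t → t ≤ n → ℙ[X t | ℱ (t - d)] ≤ᵐ[ℙ] fun _ => φ)
    (r : ℕ) (hr1 : 1 ≤ r) (ν : ℝ) (hν : 0 ≤ ν) :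
    ∀ m : ℕ, (∀ j, j < m → j * d + r ≤ n) →
      ∫ ω, Real.exp (ν * ∑ j ∈ Finset.range m, X (j * d + r) ω) ∂ℙ
        ≤ Real.exp (m * (ν * φ + ν ^ 2 / 2)) := by
  intro m
  induction m with
  | zero => intro _; simp
  | succ m ih =>
    intro hmn
    set t := m * d + r with ht_def
    have ht1 : 1 ≤ t := le_add_left hr1
    have ht2 : t ≤ n := hmn m (Nat.lt_succ_self m)
    set T : Ω → ℝ := fun ω => ∑ j ∈ Finset.range m, X (j * d + r) ω with hT_def
    have hjle : ∀ j, j < m → j * d + r ≤ t - d := by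
      intro j hj
      have h' : j * d + d ≤ m * d := by
        have := Nat.mul_le_mul_right d (Nat.succ_le_of_lt hj)
        rwa [Nat.succ_mul] at this
      exact Nat.le_sub_of_add_le (by rw [ht_def]; linarith)
    have hTmeas : Measurable[ℱ (t - d)] T := by
      apply Finset.measurable_sum
      intro j hj
      have hj' := Finset.mem_range.1 hj
      exact ((hXmeas (j * d + r) (le_add_left hr1) (hmn j (hj'.trans (Nat.lt_succ_self m)))).mono
        (ℱ.mono (hjle j hj')) le_rfl)
    have hfmeas : StronglyMeasurable[ℱ (t - d)] (fun ω => Real.exp (ν * T ω)) :=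
      ((hTmeas.const_mul ν).exp).stronglyMeasurable
    have hbdd : ∀ᵐ ω ∂ℙ, ∀ j, j < m → |X (j * d + r) ω| ≤ 1 := by
      rw [ae_all_iff]
      intro j
      by_cases hj : j < m
      · filter_upwards [hXbdd (j * d + r) (le_add_left hr1)
          (hmn j (hj.trans (Nat.lt_succ_self m)))] with ω h using fun _ => h
      · filter_upwards with ω using fun h => absurd h hj
    have hfC : ∀ᵐ ω ∂ℙ, Real.exp (ν * T ω) ≤ Real.exp (ν * m) := by
      filter_upwards [hbdd] with ω h
      apply Real.exp_le_exp.2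
      apply mul_le_mul_of_nonneg_left _ hν
      calc T ω ≤ ∑ j ∈ Finset.range m, (1 : ℝ) :=
            Finset.sum_le_sum fun j hj => (abs_le.1 (h j (Finset.mem_range.1 hj))).2
        _ = m := by simp
    have hrw : (fun ω => Real.exp (ν * ∑ j ∈ Finset.range (m + 1), X (j * d + r) ω))
        = fun ω => Real.exp (ν * T ω) * Real.exp (ν * X t ω) := by
      funext ω
      rw [Finset.sum_range_succ, mul_add, Real.exp_add]
    calc ∫ ω, Real.exp (ν * ∑ j ∈ Finset.range (m + 1), X (j * d + r) ω) ∂ℙ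
        = ∫ ω, Real.exp (ν * T ω) * Real.exp (ν * X t ω) ∂ℙ := by rw [hrw]
      _ ≤ Real.exp (ν * φ + ν ^ 2 / 2) * ∫ ω, Real.exp (ν * T ω) ∂ℙ :=
          step_bound ℙ (ℱ (t - d)) (ℱ.le _) (X t)
            ((hXmeas t ht1 ht2).mono (ℱ.le t) le_rfl) (hXbdd t ht1 ht2) φ hφ
            (hcond t ht1 ht2) ν hν _ hfmeas (fun ω => (Real.exp_pos _).le)
            (Real.exp (ν * m)) hfC
      _ ≤ Real.exp (ν * φ + ν ^ 2 / 2) * Real.exp (m * (ν * φ + ν ^ 2 / 2)) := by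
          apply mul_le_mul_of_nonneg_left _ (Real.exp_pos _).le
          exact ih (fun j hj => hmn j (hj.trans (Nat.lt_succ_self m)))
      _ = Real.exp ((m + 1 : ℕ) * (ν * φ + ν ^ 2 / 2)) := by
          rw [← Real.exp_add]
          push_cast
          ring_nf

lemma sum_decomp (d K n : ℕ) (hd : 1 ≤ d) (hn : n = K * d) (g : ℕ → ℝ) :
    ∑ t ∈ Finset.Icc 1 n, g t = ∑ r ∈ Finset.Icc 1 d, ∑ j ∈ Finset.range K, g (j * d + r) := by
  have hd0 : 0 < d := hd
  have hprod : ∑ p ∈ Finset.Icc 1 d ×ˢ Finset.range K, g (p.2 * d + p.1)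
      = ∑ r ∈ Finset.Icc 1 d, ∑ j ∈ Finset.range K, g (j * d + r) := by
    rw [Finset.sum_product]
  rw [← hprod]
  refine Finset.sum_nbij' (fun t => ((t - 1) % d + 1, (t - 1) / d))
    (fun p => p.2 * d + p.1) ?_ ?_ ?_ ?_ ?_
  · intro t ht
    obtain ⟨ht1, ht2⟩ := Finset.mem_Icc.1 ht
    refine Finset.mem_product.2 ⟨Finset.mem_Icc.2 ⟨Nat.le_add_left 1 _, ?_⟩, Finset.mem_range.2 ?_⟩
    · have := Nat.mod_lt (t - 1) hd0
      omega
    · rw [Nat.div_lt_iff_lt_mul hd0]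
      omega
  · intro p hp
    obtain ⟨hp1, hp2⟩ := Finset.mem_product.1 hp
    obtain ⟨hr1, hrd⟩ := Finset.mem_Icc.1 hp1
    have hjK := Finset.mem_range.1 hp2
    refine Finset.mem_Icc.2 ⟨le_add_left hr1, ?_⟩
    have h' : (p.2 + 1) * d ≤ K * d := Nat.mul_le_mul_right d (Nat.succ_le_of_lt hjK)
    rw [Nat.succ_mul] at h'
    rw [hn]
    linarith
  · intro t ht
    dsimp only
    obtain ⟨ht1, _⟩ := Finset.mem_Icc.1 ht
    have := Nat.div_add_mod (t - 1) d
    have hc : (t - 1) / d * d = d * ((t - 1) / d) := Nat.mul_comm _ _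
    omega
  · intro p hp
    obtain ⟨hp1, _⟩ := Finset.mem_product.1 hp
    obtain ⟨hr1, hrd⟩ := Finset.mem_Icc.1 hp1
    have h1 : p.2 * d + p.1 - 1 = (p.1 - 1) + p.2 * d := by omega
    have h3 : ((p.1 - 1) + p.2 * d) % d = p.1 - 1 := by
      rw [Nat.add_mul_mod_self_right, Nat.mod_eq_of_lt (by omega)]
    have h4 : ((p.1 - 1) + p.2 * d) / d = p.2 := by
      rw [Nat.add_mul_div_right _ _ hd0, Nat.div_eq_of_lt (by omega)]
      omega
    have : p = (p.1, p.2) := rfl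
    rw [this, h1, h3, h4, Nat.sub_add_cancel hr1]
  · intro t ht
    dsimp only
    obtain ⟨ht1, _⟩ := Finset.mem_Icc.1 ht
    have := Nat.div_add_mod (t - 1) d
    have hc : (t - 1) / d * d = d * ((t - 1) / d) := Nat.mul_comm _ _
    congr 1
    omega

/-- **Blocking concentration inequality.** Let `(ℱ t)` be a filtration (trivial at time `0`),
`d, K ≥ 1`, `n = K·d`, and `X 1, …, X n` real random variables with `X t` `ℱ t`-measurable,
`|X t| ≤ 1` a.s., and `E[X t | ℱ (t−d)] ≤ φ` a.s. for some `φ ≥ 0`. Then for every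
`δ ∈ (0,1)`, with probability at least `1 − δ`,
`(1/n) ∑ₜ X t ≤ φ + √(2 d log(1/δ)/n)`. -/
theorem blocking_concentration
    {Ω : Type*} [mΩ : MeasurableSpace Ω] (ℙ : Measure Ω) [IsProbabilityMeasure ℙ]
    (ℱ : Filtration ℕ mΩ) (hℱtriv : ℱ 0 = ⊥)
    (d K n : ℕ) (hd : 1 ≤ d) (hK : 1 ≤ K) (hn : n = K * d)
    (X : ℕ → Ω → ℝ)
    (hXmeas : ∀ t, 1 ≤ t → t ≤ n → Measurable[ℱ t] (X t))
    (hXbdd : ∀ t, 1 ≤ t → t ≤ n → ∀ᵐ ω ∂ℙ, |X t ω| ≤ 1)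
    (φ : ℝ) (hφ : 0 ≤ φ)
    (hcond : ∀ t, 1 ≤ t → t ≤ n → ℙ[X t | ℱ (t - d)] ≤ᵐ[ℙ] fun _ => φ)
    (δ : ℝ) (hδ0 : 0 < δ) (hδ1 : δ < 1) :
    1 - ENNReal.ofReal δ ≤
      ℙ {ω | (1 / (n : ℝ)) * ∑ t ∈ Finset.Icc 1 n, X t ω
              ≤ φ + Real.sqrt (2 * d * Real.log (1 / δ) / n)} := by
  classical
  have hd0 : (0:ℝ) < d := by exact_mod_cast hd
  have hn1 : 1 ≤ n := by rw [hn]; calc 1 = 1 * 1 := (mul_one 1).symm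
                                      _ ≤ K * d := Nat.mul_le_mul hK hd
  have hn0 : (0:ℝ) < n := by exact_mod_cast hn1
  have hdR : (d:ℝ) ≠ 0 := ne_of_gt hd0
  set L := Real.log (1 / δ) with hL_def
  have hL : 0 < L := Real.log_pos (by rw [lt_div_iff₀ hδ0]; linarith)
  set ε := Real.sqrt (2 * d * L / n) with hε_def
  have hεsq : ε ^ 2 = 2 * d * L / n := Real.sq_sqrt (by positivity)
  have hε : 0 < ε := Real.sqrt_pos.2 (by positivity)
  set lam := ε / d with hlam_def
  have hlam : 0 < lam := div_pos hε hd0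
  set S : ℕ → Ω → ℝ := fun r ω => ∑ j ∈ Finset.range K, X (j * d + r) ω with hS_def
  have hdecomp : ∀ ω, ∑ t ∈ Finset.Icc 1 n, X t ω = ∑ r ∈ Finset.Icc 1 d, S r ω :=
    fun ω => sum_decomp d K n hd hn (fun t => X t ω)
  have hidx : ∀ r, 1 ≤ r → r ≤ d → ∀ j, j < K → (1 ≤ j * d + r ∧ j * d + r ≤ n) := by
    intro r hr1 hrd j hj
    refine ⟨le_add_left hr1, ?_⟩
    have h' : (j + 1) * d ≤ K * d := Nat.mul_le_mul_right d (Nat.succ_le_of_lt hj)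
    rw [add_mul, one_mul] at h'
    rw [hn]
    linarith
  have hSmeas : ∀ r, 1 ≤ r → r ≤ d → Measurable (S r) := by
    intro r hr1 hrd
    apply Finset.measurable_sum
    intro j hj
    obtain ⟨h1, h2⟩ := hidx r hr1 hrd j (Finset.mem_range.1 hj)
    exact (hXmeas _ h1 h2).mono (ℱ.le _) le_rfl
  have hball : ∀ᵐ ω ∂ℙ, ∀ t, 1 ≤ t → t ≤ n → |X t ω| ≤ 1 := by
    rw [ae_all_iff]
    intro t
    by_cases h : 1 ≤ t ∧ t ≤ n
    · filter_upwards [hXbdd t h.1 h.2] with ω hh using fun _ _ => hh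
    · filter_upwards with ω using fun h1 h2 => absurd ⟨h1, h2⟩ h
  have hSbdd : ∀ r, 1 ≤ r → r ≤ d → ∀ᵐ ω ∂ℙ, S r ω ≤ K := by
    intro r hr1 hrd
    filter_upwards [hball] with ω h
    calc S r ω ≤ ∑ j ∈ Finset.range K, (1:ℝ) := by
          apply Finset.sum_le_sum
          intro j hj
          obtain ⟨h1, h2⟩ := hidx r hr1 hrd j (Finset.mem_range.1 hj)
          exact (abs_le.1 (h _ h1 h2)).2
      _ = K := by simp
  have hSint : ∀ r, 1 ≤ r → r ≤ d → Integrable (fun ω => Real.exp (ε * S r ω)) ℙ := by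
    intro r hr1 hrd
    refine Integrable.mono' (integrable_const (Real.exp (ε * K)))
      (((hSmeas r hr1 hrd).const_mul ε).exp).aestronglyMeasurable ?_
    filter_upwards [hSbdd r hr1 hrd] with ω h
    rw [Real.norm_eq_abs, abs_of_pos (Real.exp_pos _)]
    exact Real.exp_le_exp.2 (mul_le_mul_of_nonneg_left h hε.le)
  have hclass : ∀ r, 1 ≤ r → r ≤ d →
      ∫ ω, Real.exp (ε * S r ω) ∂ℙ ≤ Real.exp (K * (ε * φ + ε ^ 2 / 2)) := by
    intro r hr1 hrd
    exact class_bound ℙ ℱ d n hd X hXmeas hXbdd φ hφ hcond r hr1 ε hε.le K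
      (fun j hj => (hidx r hr1 hrd j hj).2)
  -- Hölder step
  set B := Real.exp (K * (ε * φ + ε ^ 2 / 2)) with hB_def
  have hB0 : 0 < B := Real.exp_pos _
  have hHolder : ∫⁻ ω, ENNReal.ofReal (Real.exp (lam * ∑ t ∈ Finset.Icc 1 n, X t ω)) ∂ℙ
      ≤ ENNReal.ofReal B := by
    have hcard : (Finset.Icc 1 d).card = d := by rw [Nat.card_Icc]; omega
    have hp : ∑ _r ∈ Finset.Icc 1 d, (1:ℝ)/d = 1 := by
      rw [Finset.sum_const, hcard, nsmul_eq_mul]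
      field_simp
    have hpt : ∀ ω, ENNReal.ofReal (Real.exp (lam * ∑ t ∈ Finset.Icc 1 n, X t ω))
        = ∏ r ∈ Finset.Icc 1 d,
            (ENNReal.ofReal (Real.exp (ε * S r ω))) ^ ((1:ℝ)/d) := by
      intro ω
      have e1 : ∀ r, (ENNReal.ofReal (Real.exp (ε * S r ω))) ^ ((1:ℝ)/d)
          = ENNReal.ofReal (Real.exp (lam * S r ω)) := by
        intro r
        rw [ENNReal.ofReal_rpow_of_pos (Real.exp_pos _), ← Real.exp_mul]
        congr 1
        rw [hlam_def]
        ring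
      simp_rw [e1]
      rw [← ENNReal.ofReal_prod_of_nonneg (fun r _ => (Real.exp_pos _).le), ← Real.exp_sum,
        hdecomp ω, Finset.mul_sum]
    calc ∫⁻ ω, ENNReal.ofReal (Real.exp (lam * ∑ t ∈ Finset.Icc 1 n, X t ω)) ∂ℙ
        = ∫⁻ ω, ∏ r ∈ Finset.Icc 1 d,
            (ENNReal.ofReal (Real.exp (ε * S r ω))) ^ ((1:ℝ)/d) ∂ℙ := by
          apply lintegral_congr
          exact hpt
      _ ≤ ∏ r ∈ Finset.Icc 1 d,
            (∫⁻ ω, ENNReal.ofReal (Real.exp (ε * S r ω)) ∂ℙ) ^ ((1:ℝ)/d) := by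
          apply ENNReal.lintegral_prod_norm_pow_le
          · intro r hr
            obtain ⟨hr1, hrd⟩ := Finset.mem_Icc.1 hr
            exact (((hSmeas r hr1 hrd).const_mul ε).exp.ennreal_ofReal).aemeasurable
          · exact hp
          · intro r _; positivity
      _ ≤ ∏ r ∈ Finset.Icc 1 d, (ENNReal.ofReal B) ^ ((1:ℝ)/d) := by
          apply Finset.prod_le_prod'
          intro r hr
          obtain ⟨hr1, hrd⟩ := Finset.mem_Icc.1 hr
          apply ENNReal.rpow_le_rpow _ (by positivity)
          have hnn : 0 ≤ᵐ[ℙ] fun ω => Real.exp (ε * S r ω) :=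
            Filter.Eventually.of_forall (fun ω => (Real.exp_pos _).le)
          rw [← ofReal_integral_eq_lintegral_ofReal (hSint r hr1 hrd) hnn]
          exact ENNReal.ofReal_le_ofReal (hclass r hr1 hrd)
      _ = ENNReal.ofReal B := by
          rw [Finset.prod_const, hcard, ← ENNReal.rpow_natCast _ d, ← ENNReal.rpow_mul,
            one_div, inv_mul_cancel₀ hdR, ENNReal.rpow_one]
  -- Chernoff / Markov step
  set a : ENNReal := ENNReal.ofReal (Real.exp (lam * (n * (φ + ε)))) with ha_def
  have ha0 : a ≠ 0 := by
    rw [ha_def]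
    simp [Real.exp_pos]
  have hatop : a ≠ ⊤ := ENNReal.ofReal_ne_top
  set bad := {ω | ¬ (1 / (n : ℝ)) * ∑ t ∈ Finset.Icc 1 n, X t ω ≤ φ + ε} with hbad_def
  have hsub : bad ⊆ {ω | a ≤ ENNReal.ofReal (Real.exp (lam * ∑ t ∈ Finset.Icc 1 n, X t ω))} := by
    intro ω hω
    simp only [hbad_def, Set.mem_setOf_eq, not_le] at hω
    have h1 : (n:ℝ) * (φ + ε) ≤ ∑ t ∈ Finset.Icc 1 n, X t ω := by
      have h2 := mul_lt_mul_of_pos_left hω hn0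
      have h3 : (n:ℝ) * (1 / (n:ℝ) * ∑ t ∈ Finset.Icc 1 n, X t ω)
          = ∑ t ∈ Finset.Icc 1 n, X t ω := by
        field_simp
      linarith
    show a ≤ ENNReal.ofReal (Real.exp (lam * ∑ t ∈ Finset.Icc 1 n, X t ω))
    rw [ha_def]
    exact ENNReal.ofReal_le_ofReal
      (Real.exp_le_exp.2 (mul_le_mul_of_nonneg_left h1 hlam.le))
  have hfmeas : Measurable
      (fun ω => ENNReal.ofReal (Real.exp (lam * ∑ t ∈ Finset.Icc 1 n, X t ω))) := by
    apply Measurable.ennreal_ofReal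
    apply Measurable.exp
    apply Measurable.const_mul
    apply Finset.measurable_sum
    intro t ht
    exact (hXmeas t (Finset.mem_Icc.1 ht).1 (Finset.mem_Icc.1 ht).2).mono (ℱ.le t) le_rfl
  have hmarkov := mul_meas_ge_le_lintegral₀ (μ := ℙ) hfmeas.aemeasurable a
  have hKR : (K:ℝ) ≠ 0 := by positivity
  have hnKd : (n:ℝ) = (K:ℝ) * (d:ℝ) := by exact_mod_cast congrArg (Nat.cast : ℕ → ℝ) hn
  have hKe : (K:ℝ) * ε ^ 2 = 2 * L := by
    rw [hεsq, hnKd]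
    field_simp
  have hlog : Real.log δ = -L := by
    rw [hL_def, one_div, Real.log_inv]
    ring
  have h1lam : lam * ((n:ℝ) * (φ + ε)) = K * ε * φ + K * ε ^ 2 := by
    rw [hlam_def, hnKd]
    field_simp
  have hexp_eq : (K:ℝ) * (ε * φ + ε ^ 2 / 2) = Real.log δ + lam * ((n:ℝ) * (φ + ε)) := by
    rw [hlog, h1lam]
    linarith
  have hBeq : B = δ * Real.exp (lam * ((n:ℝ) * (φ + ε))) := by
    conv_rhs => rw [← Real.exp_log hδ0, ← Real.exp_add]
    rw [hB_def]
    exact congrArg Real.exp hexp_eq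
  have hbadle : ℙ bad ≤ ENNReal.ofReal δ := by
    have h2 : a * ℙ bad ≤ ENNReal.ofReal B :=
      le_trans (mul_le_mul_right (measure_mono hsub) a) (hmarkov.trans hHolder)
    rw [hBeq, ENNReal.ofReal_mul hδ0.le, ← ha_def, mul_comm (ENNReal.ofReal δ) a] at h2
    exact (ENNReal.mul_le_mul_iff_right ha0 hatop).1 h2
  set good := {ω | (1 / (n : ℝ)) * ∑ t ∈ Finset.Icc 1 n, X t ω ≤ φ + ε} with hgood_def
  have hone : (1:ENNReal) ≤ ℙ good + ℙ bad := by
    have hcover : (Set.univ : Set Ω) ⊆ good ∪ bad := by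
      intro ω _
      by_cases h : (1 / (n : ℝ)) * ∑ t ∈ Finset.Icc 1 n, X t ω ≤ φ + ε
      · exact Or.inl h
      · exact Or.inr h
    calc (1:ENNReal) = ℙ Set.univ := measure_univ.symm
      _ ≤ ℙ (good ∪ bad) := measure_mono hcover
      _ ≤ ℙ good + ℙ bad := measure_union_le _ _
  show 1 - ENNReal.ofReal δ ≤ ℙ good
  apply tsub_le_iff_right.2
  calc (1:ENNReal) ≤ ℙ good + ℙ bad := hone
    _ ≤ ℙ good + ENNReal.ofReal δ := add_le_add_right hbadle _
end

section
/- Moment generating function bound for blocked dependent sums: let (ℱ_t)_{t∈ℕ} be a filtration (with ℱ_t trivial for t ≤ 0), let d, K ≥ 1 and n = K·d, and let X_1,…,X_n be real random variables such that each X_t is ℱ_t-measurable, |X_t| ≤ 1 almost surely, and E[X_t | ℱ_{t−d}] ≤ φ almost surely for some φ ≥ 0. Then for every λ > 0, E[exp(λ·Σ_{t=1}^n X_t)] ≤ exp(n·(λ²d/2 + λφ)). -/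
set_option autoImplicit false

open MeasureTheory

section AuxAnalysis

/-- `sinh s ≤ s * cosh s` for `s ≥ 0`. -/
lemma aux_sinh_le_mul_cosh {s : ℝ} (hs : 0 ≤ s) : Real.sinh s ≤ s * Real.cosh s := by
  have key : ∀ x : ℝ, HasDerivAt (fun y => y * Real.cosh y - Real.sinh y)
      (x * Real.sinh x) x := by
    intro x
    have h := ((hasDerivAt_id x).mul (Real.hasDerivAt_cosh x)).sub (Real.hasDerivAt_sinh x)
    refine h.congr_deriv ?_
    simp only [id_eq]
    ring
  have hmono : Monotone (fun y => y * Real.cosh y - Real.sinh y) := by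
    apply monotone_of_deriv_nonneg
    · exact fun x => (key x).differentiableAt
    · intro x
      rw [(key x).deriv]
      rcases le_or_gt 0 x with hx | hx
      · exact mul_nonneg hx (Real.sinh_nonneg_iff.mpr hx)
      · have h1 : Real.sinh x ≤ 0 := Real.sinh_nonpos_iff.mpr hx.le
        nlinarith
  have h := hmono hs
  simp only [Real.cosh_zero, Real.sinh_zero, mul_one, zero_mul, sub_zero] at h
  linarith

/-- Convexity bound: `exp (s * x) ≤ cosh s + sinh s * x` for `|x| ≤ 1`. -/
lemma aux_exp_mul_le {x : ℝ} (s : ℝ) (hx : |x| ≤ 1) :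
    Real.exp (s * x) ≤ Real.cosh s + Real.sinh s * x := by
  obtain ⟨hx1, hx2⟩ := abs_le.mp hx
  have ha : (0:ℝ) ≤ (1 + x) / 2 := by linarith
  have hb : (0:ℝ) ≤ (1 - x) / 2 := by linarith
  have hab : (1 + x) / 2 + (1 - x) / 2 = 1 := by ring
  have h := convexOn_exp.2 (Set.mem_univ s) (Set.mem_univ (-s)) ha hb hab
  simp only [smul_eq_mul] at h
  have e1 : (1 + x) / 2 * s + (1 - x) / 2 * (-s) = s * x := by ring
  rw [e1] at h
  have e2 : (1 + x) / 2 * Real.exp s + (1 - x) / 2 * Real.exp (-s)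
      = (Real.exp s + Real.exp (-s)) / 2 + (Real.exp s - Real.exp (-s)) / 2 * x := by ring
  rw [e2] at h
  rw [Real.cosh_eq, Real.sinh_eq]
  exact h

/-- Hoeffding-type bound: `cosh s + sinh s * φ ≤ exp (s²/2 + s φ)` for `s, φ ≥ 0`. -/
lemma aux_cosh_add_le {s φ : ℝ} (hs : 0 ≤ s) (hφ : 0 ≤ φ) :
    Real.cosh s + Real.sinh s * φ ≤ Real.exp (s ^ 2 / 2 + s * φ) := by
  have h1 : Real.sinh s * φ ≤ s * Real.cosh s * φ :=
    mul_le_mul_of_nonneg_right (aux_sinh_le_mul_cosh hs) hφ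
  have h2 : Real.cosh s + Real.sinh s * φ ≤ Real.cosh s * (1 + s * φ) := by nlinarith
  have h3 : (1 : ℝ) + s * φ ≤ Real.exp (s * φ) := by
    have := Real.add_one_le_exp (s * φ); linarith
  have h4 : Real.cosh s ≤ Real.exp (s ^ 2 / 2) := Real.cosh_le_exp_half_sq s
  calc Real.cosh s + Real.sinh s * φ ≤ Real.cosh s * (1 + s * φ) := h2
    _ ≤ Real.exp (s ^ 2 / 2) * Real.exp (s * φ) := by
        apply mul_le_mul h4 h3 (by positivity) (Real.exp_pos _).le
    _ = Real.exp (s ^ 2 / 2 + s * φ) := (Real.exp_add _ _).symm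

end AuxAnalysis

/-- **Moment generating function bound for blocked dependent sums.** Let `(ℱ t)` be a
filtration (trivial at time `0`), `d, K ≥ 1`, `n = K·d`, and `X 1, …, X n` real random
variables with `X t` `ℱ t`-measurable, `|X t| ≤ 1` a.s., and `E[X t | ℱ (t−d)] ≤ φ` a.s.
for some `φ ≥ 0`. Then for every `λ > 0`,
`E[exp(λ ∑ₜ X t)] ≤ exp(n (λ² d / 2 + λ φ))`. -/
theorem mgf_bound_blocked_sums
    {Ω : Type*} [mΩ : MeasurableSpace Ω] (ℙ : Measure Ω) [IsProbabilityMeasure ℙ]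
    (ℱ : Filtration ℕ mΩ) (hℱtriv : ℱ 0 = ⊥)
    (d K n : ℕ) (hd : 1 ≤ d) (hK : 1 ≤ K) (hn : n = K * d)
    (X : ℕ → Ω → ℝ)
    (hXmeas : ∀ t, 1 ≤ t → t ≤ n → Measurable[ℱ t] (X t))
    (hXbdd : ∀ t, 1 ≤ t → t ≤ n → ∀ᵐ ω ∂ℙ, |X t ω| ≤ 1)
    (φ : ℝ) (hφ : 0 ≤ φ)
    (hcond : ∀ t, 1 ≤ t → t ≤ n → ℙ[X t | ℱ (t - d)] ≤ᵐ[ℙ] fun _ => φ)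
    (lam : ℝ) (hlam : 0 < lam) :
    ∫ ω, Real.exp (lam * ∑ t ∈ Finset.Icc 1 n, X t ω) ∂ℙ
      ≤ Real.exp (n * (lam ^ 2 * d / 2 + lam * φ)) := by
  classical
  -- notation
  set s : ℝ := lam * d with hs_def
  have hs : 0 < s := by positivity
  set c : ℝ := s ^ 2 / 2 + s * φ with hc_def
  -- ambient measurability of X
  have hXmeas' : ∀ t, 1 ≤ t → t ≤ n → Measurable (X t) :=
    fun t h1 h2 => (hXmeas t h1 h2).mono (ℱ.le t) le_rfl
  -- global a.e. bound
  have hGbdd : ∀ᵐ ω ∂ℙ, ∀ t, 1 ≤ t → t ≤ n → |X t ω| ≤ 1 := by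
    rw [ae_all_iff]
    intro t
    by_cases h : 1 ≤ t ∧ t ≤ n
    · filter_upwards [hXbdd t h.1 h.2] with ω hω _ _ using hω
    · filter_upwards with ω h1 h2
      exact absurd ⟨h1, h2⟩ h
  -- integrability of bounded measurable functions
  have integ : ∀ (f : Ω → ℝ) (C : ℝ), Measurable f → (∀ᵐ ω ∂ℙ, |f ω| ≤ C) →
      Integrable f ℙ := by
    intro f C hf hb
    refine Integrable.mono' (integrable_const C) hf.aestronglyMeasurable ?_
    filter_upwards [hb] with ω hω
    simpa [Real.norm_eq_abs] using hω
  -- index helper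
  have hidx : ∀ i, i < K → ∀ j, 1 ≤ j → j ≤ d → 1 ≤ j + i * d ∧ j + i * d ≤ n := by
    intro i hi j hj1 hjd
    refine ⟨le_trans hj1 (Nat.le_add_right _ _), ?_⟩
    calc j + i * d ≤ d + i * d := Nat.add_le_add_right hjd _
      _ = (i + 1) * d := by ring
      _ ≤ K * d := mul_le_mul_left hi d
      _ = n := hn.symm
  -- a.e. bound for block partial sums
  have hBbdd : ∀ (m : ℕ), m ≤ K → ∀ (j : ℕ), 1 ≤ j → j ≤ d →
      ∀ᵐ ω ∂ℙ, |∑ i ∈ Finset.range m, X (j + i * d) ω| ≤ (m : ℝ) := by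
    intro m hm j hj1 hjd
    filter_upwards [hGbdd] with ω hω
    calc |∑ i ∈ Finset.range m, X (j + i * d) ω|
        ≤ ∑ i ∈ Finset.range m, |X (j + i * d) ω| := Finset.abs_sum_le_sum_abs _ _
      _ ≤ ∑ _i ∈ Finset.range m, (1 : ℝ) := by
          apply Finset.sum_le_sum
          intro i hi
          have hi' := Finset.mem_range.mp hi
          obtain ⟨h1, h2⟩ := hidx i (lt_of_lt_of_le hi' hm) j hj1 hjd
          exact hω _ h1 h2
      _ = (m : ℝ) := by simp
  -- measurability of block partial sums
  have hBmeasAmb : ∀ (m : ℕ), m ≤ K → ∀ (j : ℕ), 1 ≤ j → j ≤ d →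
      Measurable (fun ω => ∑ i ∈ Finset.range m, X (j + i * d) ω) := by
    intro m hm j hj1 hjd
    apply Finset.measurable_sum
    intro i hi
    have hi' := Finset.mem_range.mp hi
    obtain ⟨h1, h2⟩ := hidx i (lt_of_lt_of_le hi' hm) j hj1 hjd
    exact hXmeas' _ h1 h2
  -- main block induction
  have block : ∀ (m : ℕ), m ≤ K → ∀ (j : ℕ), 1 ≤ j → j ≤ d →
      ∫ ω, Real.exp (s * ∑ i ∈ Finset.range m, X (j + i * d) ω) ∂ℙ
        ≤ Real.exp ((m : ℝ) * c) := by
    intro m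
    induction m with
    | zero =>
      intro _ j _ _
      simp
    | succ m ih =>
      intro hm1 j hj1 hjd
      have hmK : m ≤ K := le_trans (Nat.le_succ m) hm1
      have hmK' : m < K := hm1
      -- the new index
      set t : ℕ := j + m * d with ht_def
      obtain ⟨ht1, ht2⟩ := hidx m hmK' j hj1 hjd
      -- functions
      set B : Ω → ℝ := fun ω => ∑ i ∈ Finset.range m, X (j + i * d) ω with hB_def
      set Y : Ω → ℝ := fun ω => Real.exp (s * B ω) with hY_def
      set Z : Ω → ℝ := fun ω => Real.exp (s * X t ω) with hZ_def
      -- B is ℱ (t - d) measurable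
      have hBmeasF : Measurable[ℱ (t - d)] B := by
        apply Finset.measurable_sum
        intro i hi
        have hi' := Finset.mem_range.mp hi
        have hmpos : 0 < m := by omega
        have h3 : i * d + d ≤ m * d := by
          have := mul_le_mul_left (Nat.succ_le_of_lt hi') d
          calc i * d + d = (i + 1) * d := by ring
            _ ≤ m * d := this
        have hdm : d ≤ m * d := Nat.le_mul_of_pos_left d hmpos
        have hle : j + i * d ≤ t - d := by
          rw [ht_def, Nat.add_sub_assoc hdm j]
          exact Nat.add_le_add_left (Nat.le_sub_of_add_le h3) j
        obtain ⟨h1, h2⟩ := hidx i (lt_of_lt_of_le hi' hmK) j hj1 hjd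
        exact (hXmeas _ h1 h2).mono (ℱ.mono (le_trans (Nat.le_refl _) hle)) le_rfl
      have hYmeasF : Measurable[ℱ (t - d)] Y :=
        (Real.measurable_exp.comp (hBmeasF.const_mul s))
      have hYsm : StronglyMeasurable[ℱ (t - d)] Y := hYmeasF.stronglyMeasurable
      have hBmeasA : Measurable B := hBmeasAmb m hmK j hj1 hjd
      have hYmeasA : Measurable Y := Real.measurable_exp.comp (hBmeasA.const_mul s)
      have hZmeasA : Measurable Z := Real.measurable_exp.comp ((hXmeas' t ht1 ht2).const_mul s)
      -- bounds
      have hYbdd : ∀ᵐ ω ∂ℙ, |Y ω| ≤ Real.exp (s * m) := by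
        filter_upwards [hBbdd m hmK j hj1 hjd] with ω hω
        rw [abs_of_pos (Real.exp_pos _)]
        apply Real.exp_le_exp.mpr
        apply mul_le_mul_of_nonneg_left _ hs.le
        exact le_trans (le_abs_self _) hω
      have hYnormbdd : ∀ᵐ ω ∂ℙ, ‖Y ω‖ ≤ Real.exp (s * m) := by
        filter_upwards [hYbdd] with ω hω
        simpa [Real.norm_eq_abs] using hω
      have hZbdd : ∀ᵐ ω ∂ℙ, |Z ω| ≤ Real.exp s := by
        filter_upwards [hGbdd] with ω hω
        rw [abs_of_pos (Real.exp_pos _)]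
        apply Real.exp_le_exp.mpr
        have := (abs_le.mp (hω t ht1 ht2)).2
        calc s * X t ω ≤ s * 1 := mul_le_mul_of_nonneg_left this hs.le
          _ = s := mul_one s
      -- integrabilities
      have hYint : Integrable Y ℙ := integ Y _ hYmeasA hYbdd
      have hZint : Integrable Z ℙ := integ Z _ hZmeasA hZbdd
      have hXtint : Integrable (X t) ℙ :=
        integ (X t) 1 (hXmeas' t ht1 ht2) (by filter_upwards [hGbdd] with ω hω using hω t ht1 ht2)
      -- conditional expectation bound
      have hcondZ : ℙ[Z | ℱ (t - d)] ≤ᵐ[ℙ] fun _ => Real.exp c := by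
        have hWint : Integrable ((fun _ => Real.cosh s) + Real.sinh s • X t) ℙ :=
          (integrable_const _).add (hXtint.smul _)
        have h1 : Z ≤ᵐ[ℙ] (fun _ => Real.cosh s) + Real.sinh s • X t := by
          filter_upwards [hGbdd] with ω hω
          have := aux_exp_mul_le s (hω t ht1 ht2)
          simpa [hZ_def, smul_eq_mul] using this
        have h2 := condExp_mono (m := ℱ (t - d)) hZint hWint h1
        have h3 : ℙ[(fun _ => Real.cosh s) + Real.sinh s • X t | ℱ (t - d)]
            =ᵐ[ℙ] fun ω => Real.cosh s + Real.sinh s * (ℙ[X t | ℱ (t - d)]) ω := by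
          have hadd := condExp_add (μ := ℙ) (m := ℱ (t - d))
            (integrable_const (Real.cosh s)) (hXtint.smul (Real.sinh s))
          have hsmul := condExp_smul (μ := ℙ) (m := ℱ (t - d)) (Real.sinh s) (X t)
          filter_upwards [hadd, hsmul] with ω hω1 hω2
          rw [hω1]
          simp only [Pi.add_apply]
          rw [condExp_const (ℱ.le _), hω2]
          simp [smul_eq_mul]
        filter_upwards [h2, h3, hcond t ht1 ht2] with ω hω2 hω3 hω4
        calc (ℙ[Z | ℱ (t - d)]) ω ≤ (ℙ[(fun _ => Real.cosh s) + Real.sinh s • X t | ℱ (t - d)]) ω := hω2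
          _ = Real.cosh s + Real.sinh s * (ℙ[X t | ℱ (t - d)]) ω := hω3
          _ ≤ Real.cosh s + Real.sinh s * φ := by
              have hsinh : 0 ≤ Real.sinh s := Real.sinh_nonneg_iff.mpr hs.le
              have := mul_le_mul_of_nonneg_left hω4 hsinh
              linarith
          _ ≤ Real.exp c := by rw [hc_def]; exact aux_cosh_add_le hs.le hφ
      -- a.e. bound on condexp Z (for integrability of the product)
      have hcondZbdd : ∀ᵐ ω ∂ℙ, ‖(ℙ[Z | ℱ (t - d)]) ω‖ ≤ Real.exp c := by
        have hnonneg : 0 ≤ᵐ[ℙ] ℙ[Z | ℱ (t - d)] :=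
          condExp_nonneg (Filter.Eventually.of_forall fun ω => (Real.exp_pos _).le)
        filter_upwards [hcondZ, hnonneg] with ω h1 h2
        rw [Real.norm_eq_abs, abs_of_nonneg h2]
        exact h1
      -- pull-out property
      have hmul : ℙ[Y * Z | ℱ (t - d)] =ᵐ[ℙ] Y * ℙ[Z | ℱ (t - d)] :=
        condExp_stronglyMeasurable_mul_of_bound (ℱ.le _) hYsm hZint (Real.exp (s * m)) hYnormbdd
      -- integrability of Y * Z and of the products
      have hYZint : Integrable (Y * Z) ℙ := by
        refine integ _ (Real.exp (s * m) * Real.exp s) (hYmeasA.mul hZmeasA) ?_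
        filter_upwards [hYbdd, hZbdd] with ω h1 h2
        calc |(Y * Z) ω| = |Y ω| * |Z ω| := abs_mul _ _
          _ ≤ Real.exp (s * m) * Real.exp s :=
              mul_le_mul h1 h2 (abs_nonneg _) (Real.exp_pos _).le
      have hprod1 : Integrable (fun ω => Y ω * (ℙ[Z | ℱ (t - d)]) ω) ℙ :=
        Integrable.bdd_mul integrable_condExp hYmeasA.aestronglyMeasurable hYnormbdd
      have hprod2 : Integrable (fun ω => Y ω * Real.exp c) ℙ := hYint.mul_const _
      -- the key chain
      have heq1 : (fun ω => Real.exp (s * ∑ i ∈ Finset.range (m + 1), X (j + i * d) ω))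
          = fun ω => Y ω * Z ω := by
        funext ω
        rw [Finset.sum_range_succ, mul_add, Real.exp_add]
      calc ∫ ω, Real.exp (s * ∑ i ∈ Finset.range (m + 1), X (j + i * d) ω) ∂ℙ
          = ∫ ω, (Y * Z) ω ∂ℙ := by rw [heq1]; rfl
        _ = ∫ ω, (ℙ[Y * Z | ℱ (t - d)]) ω ∂ℙ := (integral_condExp (ℱ.le _)).symm
        _ = ∫ ω, Y ω * (ℙ[Z | ℱ (t - d)]) ω ∂ℙ := integral_congr_ae hmul
        _ ≤ ∫ ω, Y ω * Real.exp c ∂ℙ := by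
            apply integral_mono_ae hprod1 hprod2
            filter_upwards [hcondZ] with ω hω
            exact mul_le_mul_of_nonneg_left hω (Real.exp_pos _).le
        _ = (∫ ω, Y ω ∂ℙ) * Real.exp c := integral_mul_const _ _
        _ ≤ Real.exp ((m : ℝ) * c) * Real.exp c := by
            apply mul_le_mul_of_nonneg_right _ (Real.exp_pos _).le
            exact ih hmK j hj1 hjd
        _ = Real.exp (((m : ℕ) + 1 : ℕ) * c) := by
            rw [← Real.exp_add]
            congr 1
            push_cast
            ring
  -- reindexing: sum over [1, n] = sum over blocks
  have hsum : ∀ ω, ∑ t ∈ Finset.Icc 1 n, X t ω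
      = ∑ j ∈ Finset.Icc 1 d, ∑ i ∈ Finset.range K, X (j + i * d) ω := by
    intro ω
    rw [← Finset.sum_product']
    apply Finset.sum_nbij' (i := fun t => ((t - 1) % d + 1, (t - 1) / d))
      (j := fun p => p.1 + p.2 * d)
    · intro t ht
      obtain ⟨ht1, ht2⟩ := Finset.mem_Icc.mp ht
      refine Finset.mem_product.mpr ⟨Finset.mem_Icc.mpr ⟨Nat.le_add_left _ _, ?_⟩,
        Finset.mem_range.mpr ?_⟩
      · have := Nat.mod_lt (t - 1) (show 0 < d by omega)
        omega
      · rw [Nat.div_lt_iff_lt_mul (show 0 < d by omega)]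
        have : t - 1 < n := by omega
        rw [hn] at this
        exact this
    · intro p hp
      obtain ⟨hp1, hp2⟩ := Finset.mem_product.mp hp
      obtain ⟨h1, h2⟩ := Finset.mem_Icc.mp hp1
      have h3 := Finset.mem_range.mp hp2
      obtain ⟨hq1, hq2⟩ := hidx p.2 h3 p.1 h1 h2
      exact Finset.mem_Icc.mpr ⟨hq1, hq2⟩
    · intro t ht
      obtain ⟨ht1, ht2⟩ := Finset.mem_Icc.mp ht
      obtain ⟨u, rfl⟩ : ∃ u, t = u + 1 := ⟨t - 1, by omega⟩
      simp only [Nat.add_sub_cancel]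
      calc u % d + 1 + u / d * d = (u % d + u / d * d) + 1 := by ring
        _ = u + 1 := by rw [Nat.mod_add_div']
    · rintro ⟨j, i⟩ hp
      obtain ⟨hp1, hp2⟩ := Finset.mem_product.mp hp
      obtain ⟨h1, h2⟩ := Finset.mem_Icc.mp hp1
      obtain ⟨v, rfl⟩ : ∃ v, j = v + 1 := ⟨j - 1, by omega⟩
      have hv : v < d := by omega
      have e1 : v + 1 + i * d - 1 = v + i * d := by omega
      have e2 : (v + i * d) % d = v := by
        rw [Nat.add_mul_mod_self_right]
        exact Nat.mod_eq_of_lt hv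
      have e3 : (v + i * d) / d = i := by
        rw [Nat.add_mul_div_right _ _ (show 0 < d by omega), Nat.div_eq_of_lt hv]
        simp
      simp [e1, e2, e3]
    · intro t ht
      obtain ⟨ht1, ht2⟩ := Finset.mem_Icc.mp ht
      obtain ⟨u, rfl⟩ : ∃ u, t = u + 1 := ⟨t - 1, by omega⟩
      simp only [Nat.add_sub_cancel]
      congr 1
      calc u + 1 = (u % d + u / d * d) + 1 := by rw [Nat.mod_add_div']
        _ = u % d + 1 + u / d * d := by ring
  -- convexity step
  have hdR : (0:ℝ) < (d : ℝ) := by exact_mod_cast hd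
  have hconv : ∀ ω, Real.exp (lam * ∑ t ∈ Finset.Icc 1 n, X t ω)
      ≤ ∑ j ∈ Finset.Icc 1 d, (1 / (d:ℝ)) * Real.exp (s * ∑ i ∈ Finset.range K, X (j + i * d) ω) := by
    intro ω
    have hw : ∑ _j ∈ Finset.Icc 1 d, (1 / (d:ℝ)) = 1 := by
      rw [Finset.sum_const, Nat.card_Icc]
      simp only [Nat.add_sub_cancel, nsmul_eq_mul]
      field_simp
    have h := convexOn_exp.map_sum_le (t := Finset.Icc 1 d) (w := fun _ => (1 / (d:ℝ)))
      (p := fun j => s * ∑ i ∈ Finset.range K, X (j + i * d) ω)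
      (fun _ _ => by positivity) hw (fun _ _ => Set.mem_univ _)
    have harg : ∑ j ∈ Finset.Icc 1 d, (1 / (d:ℝ)) • (s * ∑ i ∈ Finset.range K, X (j + i * d) ω)
        = lam * ∑ t ∈ Finset.Icc 1 n, X t ω := by
      rw [hsum ω, Finset.mul_sum]
      apply Finset.sum_congr rfl
      intro j _
      rw [smul_eq_mul, hs_def]
      field_simp
    rw [harg] at h
    exact h
  -- integrability for final step
  have hSmeas : Measurable (fun ω => Real.exp (lam * ∑ t ∈ Finset.Icc 1 n, X t ω)) := by
    apply Real.measurable_exp.comp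
    apply Measurable.const_mul
    apply Finset.measurable_sum
    intro t ht
    obtain ⟨h1, h2⟩ := Finset.mem_Icc.mp ht
    exact hXmeas' t h1 h2
  have hSbdd : ∀ᵐ ω ∂ℙ, |Real.exp (lam * ∑ t ∈ Finset.Icc 1 n, X t ω)| ≤ Real.exp (lam * n) := by
    filter_upwards [hGbdd] with ω hω
    rw [abs_of_pos (Real.exp_pos _)]
    apply Real.exp_le_exp.mpr
    apply mul_le_mul_of_nonneg_left _ hlam.le
    calc ∑ t ∈ Finset.Icc 1 n, X t ω ≤ ∑ t ∈ Finset.Icc 1 n, |X t ω| :=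
          Finset.sum_le_sum fun t _ => le_abs_self _
      _ ≤ ∑ _t ∈ Finset.Icc 1 n, (1:ℝ) := by
          apply Finset.sum_le_sum
          intro t ht
          obtain ⟨h1, h2⟩ := Finset.mem_Icc.mp ht
          exact hω t h1 h2
      _ = (n : ℝ) := by rw [Finset.sum_const, Nat.card_Icc]; simp
  have hSint : Integrable (fun ω => Real.exp (lam * ∑ t ∈ Finset.Icc 1 n, X t ω)) ℙ :=
    integ _ _ hSmeas hSbdd
  have hTint : ∀ j ∈ Finset.Icc 1 d,
      Integrable (fun ω => (1 / (d:ℝ)) * Real.exp (s * ∑ i ∈ Finset.range K, X (j + i * d) ω)) ℙ := by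
    intro j hj
    obtain ⟨hj1, hj2⟩ := Finset.mem_Icc.mp hj
    refine Integrable.const_mul ?_ _
    refine integ _ (Real.exp (s * K)) (Real.measurable_exp.comp
      ((hBmeasAmb K le_rfl j hj1 hj2).const_mul s)) ?_
    filter_upwards [hBbdd K le_rfl j hj1 hj2] with ω hω
    rw [abs_of_pos (Real.exp_pos _)]
    apply Real.exp_le_exp.mpr
    exact mul_le_mul_of_nonneg_left (le_trans (le_abs_self _) hω) hs.le
  -- final chain
  calc ∫ ω, Real.exp (lam * ∑ t ∈ Finset.Icc 1 n, X t ω) ∂ℙ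
      ≤ ∫ ω, ∑ j ∈ Finset.Icc 1 d,
          (1 / (d:ℝ)) * Real.exp (s * ∑ i ∈ Finset.range K, X (j + i * d) ω) ∂ℙ := by
        apply integral_mono hSint (integrable_finset_sum _ hTint)
        intro ω
        exact hconv ω
    _ = ∑ j ∈ Finset.Icc 1 d,
          ∫ ω, (1 / (d:ℝ)) * Real.exp (s * ∑ i ∈ Finset.range K, X (j + i * d) ω) ∂ℙ :=
        integral_finset_sum _ hTint
    _ ≤ ∑ _j ∈ Finset.Icc 1 d, (1 / (d:ℝ)) * Real.exp ((K:ℝ) * c) := by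
        apply Finset.sum_le_sum
        intro j hj
        obtain ⟨hj1, hj2⟩ := Finset.mem_Icc.mp hj
        rw [integral_const_mul]
        apply mul_le_mul_of_nonneg_left _ (by positivity)
        exact block K le_rfl j hj1 hj2
    _ = Real.exp ((K:ℝ) * c) := by
        rw [Finset.sum_const, Nat.card_Icc]
        simp only [Nat.add_sub_cancel, nsmul_eq_mul]
        field_simp
    _ = Real.exp (n * (lam ^ 2 * d / 2 + lam * φ)) := by
        congr 1
        rw [hc_def, hs_def, hn]
        push_cast
        ring
end

section
/- Jensen step of the delayed-regret reduction: let R : (0,∞) → ℝ be a nondecreasing function such that for every fixed x > 0 the map y ↦ y·R(x/y) is concave on (0,∞). Then for any d ≥ 1 and any positive reals n_1, …, n_d with Σ_{i=1}^d n_i = n, one has Σ_{i=1}^d R(n_i) ≤ d·R(n/d). -/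
set_option autoImplicit false

/-- **Jensen step of the delayed-regret reduction (Weinberger–Ordentlich).**
Let `R : (0,∞) → ℝ` be nondecreasing and such that for every fixed `x > 0` the map
`y ↦ y·R(x/y)` is concave on `(0,∞)`. Then for any `d ≥ 1` and positive reals
`n₁, …, n_d` summing to `n`, one has `∑ᵢ R(nᵢ) ≤ d·R(n/d)`. -/
theorem jensen_step_delayed_regret
    (R : ℝ → ℝ) (hmono : MonotoneOn R (Set.Ioi (0 : ℝ)))
    (hconc : ∀ x : ℝ, 0 < x → ConcaveOn ℝ (Set.Ioi (0 : ℝ)) (fun y => y * R (x / y)))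
    (d : ℕ) (hd : 1 ≤ d)
    (m : Fin d → ℝ) (hm : ∀ i, 0 < m i)
    (n : ℝ) (hsum : ∑ i, m i = n) :
    ∑ i, R (m i) ≤ d * R (n / d) := by
  have hn : 0 < n := by
    rw [← hsum]
    exact Finset.sum_pos (fun i _ => hm i) (Finset.univ_nonempty_iff.2 ⟨⟨0, hd⟩⟩)
  have key := (hconc n hn).le_map_sum (t := Finset.univ) (w := fun i => m i / n)
    (p := fun i => n / m i)
    (fun i _ => by have := hm i; positivity)
    (by rw [← Finset.sum_div, hsum, div_self hn.ne'])
    (fun i _ => Set.mem_Ioi.2 (by have := hm i; positivity))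
  have h1 : ∑ i, (m i / n) • ((fun y => y * R (n / y)) (n / m i)) = ∑ i, R (m i) := by
    refine Finset.sum_congr rfl fun i _ => ?_
    have hmi := (hm i).ne'
    field_simp; rw [smul_eq_mul, div_mul_div_comm, div_eq_iff (mul_ne_zero hn.ne' hmi)]; ring
  have h2 : (∑ i : Fin d, (m i / n) • (n / m i)) = (d : ℝ) := by
    have h : ∀ i : Fin d, m i / n * (n / m i) = 1 := fun i => by
      have hmi := (hm i).ne'
      field_simp
    simp [smul_eq_mul, h]
  rw [h1, h2] at key
  simpa [mul_comm] using key
end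

section
/- Regret bound for the exponentially weighted average algorithm: let 𝒲 be a measurable space, P_1 a probability measure on 𝒲, η > 0, and c_1,…,c_n : 𝒲 → ℝ bounded measurable functions. Define P_2,…,P_{n+1} recursively by dP_{t+1}/dP_t = e^{−η c_t(·)} / ∫ e^{−η c_t(w')} dP_t(w'). Then for every probability measure P* on 𝒲 absolutely continuous with respect to P_1 with finite Kullback–Leibler divergence KL(P*‖P_1), Σ_{t=1}^n (⟨P_t, c_t⟩ − ⟨P*, c_t⟩) ≤ KL(P*‖P_1)/η + (η/2)·Σ_{t=1}^n ‖c_t‖_∞², where ‖c‖_∞ = sup_{w} |c(w)|. -/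
set_option autoImplicit false

open MeasureTheory

section EWAAux

private lemma core_scalar {p : ℝ} (hp0 : 0 ≤ p) (hp1 : p ≤ 1) (l : ℝ) :
    Real.log (1 - p + p * Real.exp l) ≤ p * l + l ^ 2 / 8 := by
  have hg : ∀ x : ℝ, 0 < 1 - p + p * Real.exp x := by
    intro x
    rcases eq_or_lt_of_le hp1 with h | h
    · have := Real.exp_pos x
      nlinarith
    · nlinarith [mul_nonneg hp0 (Real.exp_pos x).le]
  set F : ℝ → ℝ := fun x => p * x + x ^ 2 / 8 - Real.log (1 - p + p * Real.exp x) with hF_def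
  set F' : ℝ → ℝ := fun x => p + x / 4 - p * Real.exp x / (1 - p + p * Real.exp x) with hF'_def
  have hgd : ∀ x : ℝ, HasDerivAt (fun y => 1 - p + p * Real.exp y) (p * Real.exp x) x := by
    intro x
    simpa using ((Real.hasDerivAt_exp x).const_mul p).const_add (1 - p)
  have hF : ∀ x, HasDerivAt F (F' x) x := by
    intro x
    have h1 : HasDerivAt (fun y => p * y + y ^ 2 / 8) (p + x * 2 / 8) x := by
      have := ((hasDerivAt_id x).const_mul p).add
        (((hasDerivAt_pow 2 x)).div_const 8)
      simpa [mul_comm, Pi.add_def] using this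
    have h2 : HasDerivAt (fun y => Real.log (1 - p + p * Real.exp y))
        (p * Real.exp x / (1 - p + p * Real.exp x)) x := (hgd x).log (hg x).ne'
    have := h1.fun_sub h2
    refine this.congr_deriv ?_
    simp [hF'_def]; ring
  have hF'' : ∀ x, HasDerivAt F'
      (1 / 4 - p * Real.exp x * (1 - p) / (1 - p + p * Real.exp x) ^ 2) x := by
    intro x
    have h1 : HasDerivAt (fun y => p + y / 4) (1 / 4) x := by
      simpa using ((hasDerivAt_id x).div_const 4).const_add p
    have h2 : HasDerivAt (fun y => p * Real.exp y / (1 - p + p * Real.exp y))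
        ((p * Real.exp x * (1 - p + p * Real.exp x) - p * Real.exp x * (p * Real.exp x)) /
          (1 - p + p * Real.exp x) ^ 2) x :=
      ((Real.hasDerivAt_exp x).const_mul p).div (hgd x) (hg x).ne'
    have := h1.fun_sub h2
    refine this.congr_deriv ?_
    have := (hg x).ne'
    field_simp
    ring
  have hmono : Monotone F' := by
    apply monotone_of_deriv_nonneg (fun x => (hF'' x).differentiableAt)
    intro x
    rw [(hF'' x).deriv]
    have h := hg x
    have he : 0 ≤ p * Real.exp x := mul_nonneg hp0 (Real.exp_pos x).le
    have key : 4 * (p * Real.exp x * (1 - p)) ≤ (1 - p + p * Real.exp x) ^ 2 := by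
      nlinarith [sq_nonneg (1 - p - p * Real.exp x)]
    rw [sub_nonneg, div_le_iff₀ (by positivity)]
    linarith
  have hF'0 : F' 0 = 0 := by simp [hF'_def]
  have hF0 : F 0 = 0 := by simp [hF_def]
  have hFdiff : Differentiable ℝ F := fun x => (hF x).differentiableAt
  have hge : 0 ≤ F l := by
    rcases le_or_gt 0 l with h | h
    · have : MonotoneOn F (Set.Ici 0) := by
        apply monotoneOn_of_deriv_nonneg (convex_Ici 0) hFdiff.continuous.continuousOn
          hFdiff.differentiableOn
        intro x hx
        rw [(hF x).deriv]
        rw [interior_Ici] at hx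
        have := hmono (le_of_lt hx)
        rw [hF'0] at this
        exact this
      have := this (Set.self_mem_Ici) (Set.mem_Ici.2 h) h
      rwa [hF0] at this
    · have : AntitoneOn F (Set.Iic 0) := by
        apply antitoneOn_of_deriv_nonpos (convex_Iic 0) hFdiff.continuous.continuousOn
          hFdiff.differentiableOn
        intro x hx
        rw [(hF x).deriv]
        rw [interior_Iic] at hx
        have := hmono (le_of_lt hx)
        rw [hF'0] at this
        exact this
      have := this (Set.mem_Iic.2 h.le) (Set.self_mem_Iic) h.le
      rwa [hF0] at this
  have : Real.log (1 - p + p * Real.exp l) ≤ p * l + l ^ 2 / 8 := by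
    have := hge
    simp only [hF_def] at this
    linarith
  exact this

private lemma integrable_of_bdd {𝒲 : Type*} [MeasurableSpace 𝒲] {Q : Measure 𝒲} [IsFiniteMeasure Q]
    {f : 𝒲 → ℝ} (hf : Measurable f) {B : ℝ} (hB : ∀ w, |f w| ≤ B) : Integrable f Q :=
  (integrable_const B).mono' hf.aestronglyMeasurable (Filter.Eventually.of_forall hB)


private lemma mgf_bound {𝒲 : Type*} [MeasurableSpace 𝒲] [Nonempty 𝒲]
    (Q : Measure 𝒲) [IsProbabilityMeasure Q]
    (f : 𝒲 → ℝ) (hf : Measurable f) (B : ℝ) (hB : ∀ w, |f w| ≤ B) (l : ℝ) :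
    ∫ w, Real.exp (l * f w) ∂Q ≤ Real.exp (l * ∫ w, f w ∂Q + l ^ 2 * B ^ 2 / 2) := by
  have hB0 : 0 ≤ B := le_trans (abs_nonneg _) (hB (Classical.arbitrary 𝒲))
  rcases eq_or_lt_of_le hB0 with hB0' | hBpos
  · -- B = 0, f ≡ 0
    have hf0 : ∀ w, f w = 0 := fun w => abs_eq_zero.1 (le_antisymm (hB0' ▸ hB w) (abs_nonneg _))
    simp [hf0, ← hB0']
  have hfint : Integrable f Q := integrable_of_bdd hf hB
  set m : ℝ := ∫ w, f w ∂Q with hm_def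
  have hmB : |m| ≤ B := by
    have h1 : |m| ≤ ∫ w, |f w| ∂Q := by
      simpa [Real.norm_eq_abs] using norm_integral_le_integral_norm (μ := Q) f
    have h2 : ∫ w, |f w| ∂Q ≤ ∫ _w, B ∂Q :=
      integral_mono hfint.abs (integrable_const B) (fun w => hB w)
    simpa using h1.trans h2
  -- pointwise chord bound
  have hchord : ∀ w, Real.exp (l * f w) ≤
      (B - f w) / (2 * B) * Real.exp (-(l * B)) + (B + f w) / (2 * B) * Real.exp (l * B) := by
    intro w
    have h1 : |f w| ≤ B := hB w
    have ha : (0:ℝ) ≤ (B - f w) / (2 * B) := by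
      apply div_nonneg _ (by linarith); cases abs_le.1 h1; linarith
    have hb : (0:ℝ) ≤ (B + f w) / (2 * B) := by
      apply div_nonneg _ (by linarith); cases abs_le.1 h1; linarith
    have hBne : B ≠ 0 := hBpos.ne'
    have h2B : (2 * B) ≠ 0 := by positivity
    have hab : (B - f w) / (2 * B) + (B + f w) / (2 * B) = 1 := by
      field_simp
      ring
    have := convexOn_exp.2 (Set.mem_univ (-(l * B))) (Set.mem_univ (l * B)) ha hb hab
    have harg : (B - f w) / (2 * B) * (-(l * B)) + (B + f w) / (2 * B) * (l * B) = l * f w := by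
      rw [div_mul_eq_mul_div, div_mul_eq_mul_div, ← add_div, div_eq_iff h2B]
      ring
    simp only [smul_eq_mul] at this
    rw [harg] at this
    exact this
  -- integrate the chord bound
  have hintexp : Integrable (fun w => Real.exp (l * f w)) Q := by
    apply integrable_of_bdd (by fun_prop) (B := Real.exp (|l| * B))
    intro w
    rw [abs_of_pos (Real.exp_pos _)]
    apply Real.exp_le_exp.2
    calc l * f w ≤ |l * f w| := le_abs_self _
    _ = |l| * |f w| := abs_mul l (f w)
    _ ≤ |l| * B := by apply mul_le_mul_of_nonneg_left (hB w) (abs_nonneg l)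
  have hintrhs : Integrable (fun w => (B - f w) / (2 * B) * Real.exp (-(l * B))
      + (B + f w) / (2 * B) * Real.exp (l * B)) Q := by
    apply Integrable.add <;> apply Integrable.mul_const
    · exact (((integrable_const B).sub hfint).div_const _)
    · exact (((integrable_const B).add hfint).div_const _)
  have step1 : ∫ w, Real.exp (l * f w) ∂Q ≤
      (B - m) / (2 * B) * Real.exp (-(l * B)) + (B + m) / (2 * B) * Real.exp (l * B) := by
    calc ∫ w, Real.exp (l * f w) ∂Q
        ≤ ∫ w, ((B - f w) / (2 * B) * Real.exp (-(l * B))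
          + (B + f w) / (2 * B) * Real.exp (l * B)) ∂Q :=
          integral_mono hintexp hintrhs hchord
    _ = (B - m) / (2 * B) * Real.exp (-(l * B)) + (B + m) / (2 * B) * Real.exp (l * B) := by
        rw [integral_add (by apply Integrable.mul_const; exact ((integrable_const B).sub hfint).div_const _)
          (by apply Integrable.mul_const; exact ((integrable_const B).add hfint).div_const _)]
        rw [integral_mul_const, integral_mul_const]
        congr 1 <;> rw [integral_div] <;> congr 2
        · rw [integral_sub (integrable_const B) hfint]; simp [hm_def]
        · rw [integral_add (integrable_const B) hfint]; simp [hm_def]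
  -- apply core_scalar with p = (B+m)/(2B), λ = 2lB
  set p : ℝ := (B + m) / (2 * B) with hp_def
  have hp0 : 0 ≤ p := by apply div_nonneg _ (by linarith); cases abs_le.1 hmB; linarith
  have hp1 : p ≤ 1 := by
    rw [div_le_one (by linarith)]; cases abs_le.1 hmB; linarith
  have hrepr : (B - m) / (2 * B) * Real.exp (-(l * B)) + p * Real.exp (l * B)
      = Real.exp (-(l * B)) * (1 - p + p * Real.exp (2 * l * B)) := by
    have hBne : B ≠ 0 := hBpos.ne'
    have h2B : (2 * B) ≠ 0 := by positivity
    have h1p : (B - m) / (2 * B) = 1 - p := by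
      rw [hp_def, eq_sub_iff_add_eq, ← add_div, div_eq_one_iff_eq h2B]
      ring
    rw [h1p]
    have : Real.exp (l * B) = Real.exp (-(l * B)) * Real.exp (2 * l * B) := by
      rw [← Real.exp_add]; ring_nf
    rw [this]; ring
  have hcs := core_scalar hp0 hp1 (2 * l * B)
  have hposarg : 0 < 1 - p + p * Real.exp (2 * l * B) := by
    rcases eq_or_lt_of_le hp1 with h | h
    · have := Real.exp_pos (2 * l * B); nlinarith
    · nlinarith [mul_nonneg hp0 (Real.exp_pos (2 * l * B)).le]
  have step2 : 1 - p + p * Real.exp (2 * l * B) ≤ Real.exp (p * (2 * l * B) + (2 * l * B) ^ 2 / 8) := by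
    rw [← Real.exp_log hposarg]
    exact Real.exp_le_exp.2 hcs
  have hfinal : Real.exp (-(l * B)) * (1 - p + p * Real.exp (2 * l * B))
      ≤ Real.exp (l * m + l ^ 2 * B ^ 2 / 2) := by
    calc Real.exp (-(l * B)) * (1 - p + p * Real.exp (2 * l * B))
        ≤ Real.exp (-(l * B)) * Real.exp (p * (2 * l * B) + (2 * l * B) ^ 2 / 8) :=
          mul_le_mul_of_nonneg_left step2 (Real.exp_pos _).le
    _ = Real.exp (-(l * B) + (p * (2 * l * B) + (2 * l * B) ^ 2 / 8)) := by rw [← Real.exp_add]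
    _ = Real.exp (l * m + l ^ 2 * B ^ 2 / 2) := by
        congr 1
        have hBne : B ≠ 0 := by positivity
        have hpB : p * (2 * l * B) = l * (B + m) := by rw [hp_def]; field_simp
        rw [hpB]; ring
  calc ∫ w, Real.exp (l * f w) ∂Q ≤ _ := step1
  _ ≤ Real.exp (l * m + l ^ 2 * B ^ 2 / 2) := by rw [hrepr] at *; exact hfinal
  _ = _ := by rw [hm_def]

private lemma gibbs {𝒲 : Type*} [MeasurableSpace 𝒲] (P₁ Pstar : Measure 𝒲)
    [IsProbabilityMeasure P₁] [IsProbabilityMeasure Pstar]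
    (hac : Pstar ≪ P₁)
    (hKL : Integrable (fun w => Real.log ((Pstar.rnDeriv P₁ w).toReal)) Pstar)
    (g : 𝒲 → ℝ) (hg : Measurable g) (a b : ℝ) (ha : 0 < a)
    (hbd : ∀ w, a ≤ g w ∧ g w ≤ b)
    (hmass : ∫⁻ w, ENNReal.ofReal (g w) ∂P₁ ≤ 1) :
    ∫ w, Real.log (g w) ∂Pstar ≤ ∫ w, Real.log ((Pstar.rnDeriv P₁ w).toReal) ∂Pstar := by
  set r : 𝒲 → ℝ := fun w => (Pstar.rnDeriv P₁ w).toReal with hr_def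
  have hgpos : ∀ w, 0 < g w := fun w => lt_of_lt_of_le ha (hbd w).1
  have hrmeas : Measurable r := (Measure.measurable_rnDeriv _ _).ennreal_toReal
  -- a.e. positivity and finiteness of rnDeriv w.r.t. Pstar
  have hlt : ∀ᵐ w ∂Pstar, Pstar.rnDeriv P₁ w < ⊤ := hac.ae_le (Measure.rnDeriv_lt_top Pstar P₁)
  have hpos : ∀ᵐ w ∂Pstar, 0 < Pstar.rnDeriv P₁ w := Measure.rnDeriv_pos hac
  have hrpos : ∀ᵐ w ∂Pstar, 0 < r w := by
    filter_upwards [hlt, hpos] with w h1 h2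
    exact ENNReal.toReal_pos h2.ne' h1.ne
  -- the function h = g / r is integrable with integral ≤ 1
  have hlint : ∫⁻ w, ENNReal.ofReal (g w / r w) ∂Pstar ≤ 1 := by
    have hmeas : Measurable fun w => ENNReal.ofReal (g w / r w) :=
      (hg.div hrmeas).ennreal_ofReal
    rw [← lintegral_rnDeriv_mul hac hmeas.aemeasurable]
    have hle : ∀ᵐ w ∂P₁, Pstar.rnDeriv P₁ w * ENNReal.ofReal (g w / r w)
        ≤ ENNReal.ofReal (g w) := by
      filter_upwards [Measure.rnDeriv_lt_top Pstar P₁] with w hw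
      rcases eq_or_ne (Pstar.rnDeriv P₁ w) 0 with h0 | h0
      · simp [h0]
      · have hrw : 0 < r w := ENNReal.toReal_pos h0 hw.ne
        have : Pstar.rnDeriv P₁ w = ENNReal.ofReal (r w) := by
          rw [hr_def]; exact (ENNReal.ofReal_toReal hw.ne).symm
        rw [this, ← ENNReal.ofReal_mul ENNReal.toReal_nonneg]
        apply ENNReal.ofReal_le_ofReal
        rw [mul_div_cancel₀]
        exact hrw.ne'
    exact le_trans (lintegral_mono_ae hle) hmass
  have hdivnn : ∀ w, 0 ≤ g w / r w :=
    fun w => div_nonneg (hgpos w).le ENNReal.toReal_nonneg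
  have hdivint : Integrable (fun w => g w / r w) Pstar := by
    refine ⟨(hg.div hrmeas).aestronglyMeasurable, ?_⟩
    rw [hasFiniteIntegral_iff_ofReal (Filter.Eventually.of_forall hdivnn)]
    exact lt_of_le_of_lt hlint ENNReal.one_lt_top
  have hdivle : ∫ w, g w / r w ∂Pstar ≤ 1 := by
    rw [integral_eq_lintegral_of_nonneg_ae (Filter.Eventually.of_forall hdivnn)
      (hg.div hrmeas).aestronglyMeasurable]
    calc (∫⁻ w, ENNReal.ofReal (g w / r w) ∂Pstar).toReal ≤ (1 : ENNReal).toReal :=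
      ENNReal.toReal_mono ENNReal.one_ne_top hlint
    _ = 1 := by simp
  -- log g is integrable (bounded)
  have hlogbd : ∀ w, |Real.log (g w)| ≤ max |Real.log a| |Real.log b| := by
    intro w
    rcases le_or_gt 0 (Real.log (g w)) with h | h
    · rw [abs_of_nonneg h]
      refine le_max_of_le_right ?_
      refine le_trans (Real.log_le_log (hgpos w) (hbd w).2) (le_abs_self _)
    · rw [abs_of_neg h]
      refine le_max_of_le_left ?_
      have := Real.log_le_log ha (hbd w).1
      rw [← abs_neg]
      exact le_trans (neg_le_neg this) (le_abs_self _)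
  have hloggint : Integrable (fun w => Real.log (g w)) Pstar :=
    (integrable_const _).mono' (hg.log.aestronglyMeasurable)
      (Filter.Eventually.of_forall hlogbd)
  -- pointwise: log g - log r ≤ g/r - 1 a.e.
  have hptwise : ∀ᵐ w ∂Pstar, Real.log (g w) - Real.log (r w) ≤ g w / r w - 1 := by
    filter_upwards [hrpos] with w hw
    have h1 : Real.log (g w) - Real.log (r w) = Real.log (g w / r w) :=
      (Real.log_div (hgpos w).ne' hw.ne').symm
    rw [h1]
    exact Real.log_le_sub_one_of_pos (div_pos (hgpos w) hw)
  have hsub : ∫ w, (Real.log (g w) - Real.log (r w)) ∂Pstar ≤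
      ∫ w, (g w / r w - 1) ∂Pstar :=
    integral_mono_ae (hloggint.sub hKL) (hdivint.sub (integrable_const 1)) hptwise
  rw [integral_sub hloggint hKL, integral_sub hdivint (integrable_const 1)] at hsub
  simp only [integral_const, probReal_univ, ENNReal.toReal_one, smul_eq_mul, one_mul] at hsub
  linarith

-- exp(-η c) is bounded and its integral positive
private lemma exp_bdd {η B x : ℝ} (hB : |x| ≤ B) :
    Real.exp (-(|η| * B)) ≤ Real.exp (-η * x) ∧ Real.exp (-η * x) ≤ Real.exp (|η| * B) := by
  constructor <;> apply Real.exp_le_exp.2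
  · have : |(-η) * x| ≤ |η| * B := by
      rw [abs_mul, abs_neg]
      exact mul_le_mul_of_nonneg_left hB (abs_nonneg η)
    linarith [(abs_le.1 this).1]
  · have : |(-η) * x| ≤ |η| * B := by
      rw [abs_mul, abs_neg]
      exact mul_le_mul_of_nonneg_left hB (abs_nonneg η)
    linarith [(abs_le.1 this).2]


end EWAAux

/-- **Regret bound for the exponentially weighted average algorithm.** Let `𝒲` be a
measurable space, `P₁` a probability measure on `𝒲`, `η > 0`, and `c 1, …, c n` bounded
measurable real functions on `𝒲`. Define `P 2, …, P (n+1)` recursively by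
`dP (t+1)/dP t = exp(−η c t)/∫ exp(−η c t) dP t`. Then for every probability measure `P*`
absolutely continuous w.r.t. `P₁` with finite KL divergence,
`∑ₜ (⟨P t, c t⟩ − ⟨P*, c t⟩) ≤ KL(P*‖P₁)/η + (η/2) ∑ₜ ‖c t‖_∞²`. -/
theorem regret_bound_EWA
    {𝒲 : Type*} [MeasurableSpace 𝒲] [Nonempty 𝒲]
    (P₁ : Measure 𝒲) [IsProbabilityMeasure P₁]
    (η : ℝ) (hη : 0 < η)
    (n : ℕ)
    (c : ℕ → 𝒲 → ℝ) (hcmeas : ∀ t, Measurable (c t))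
    (hcbdd : ∀ t, ∃ B : ℝ, ∀ w, |c t w| ≤ B)
    (P : ℕ → Measure 𝒲) (hP1 : P 1 = P₁)
    (hPrec : ∀ t ∈ Finset.Icc 1 n, P (t + 1) =
      (P t).withDensity (fun w => ENNReal.ofReal
        (Real.exp (-η * c t w) / ∫ w', Real.exp (-η * c t w') ∂(P t))))
    (Pstar : Measure 𝒲) [IsProbabilityMeasure Pstar]
    (hac : Pstar ≪ P₁)
    (hKLfin : Integrable (fun w => Real.log ((Pstar.rnDeriv P₁ w).toReal)) Pstar) :
    ∑ t ∈ Finset.Icc 1 n, ((∫ w, c t w ∂(P t)) - ∫ w, c t w ∂Pstar)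
      ≤ (∫ w, Real.log ((Pstar.rnDeriv P₁ w).toReal) ∂Pstar) / η
        + η / 2 * ∑ t ∈ Finset.Icc 1 n, (⨆ w, |c t w|) ^ 2 := by
  -- notation
  set Z : ℕ → ℝ := fun s => ∫ w', Real.exp (-η * c s w') ∂(P s) with hZ_def
  -- main induction
  have key : ∀ t : ℕ, t ≤ n → ∃ g : 𝒲 → ℝ, Measurable g ∧
      (∃ a b : ℝ, 0 < a ∧ ∀ w, a ≤ g w ∧ g w ≤ b) ∧
      P (t + 1) = P₁.withDensity (fun w => ENNReal.ofReal (g w)) ∧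
      IsProbabilityMeasure (P (t + 1)) ∧
      ∫ w, Real.log (g w) ∂Pstar =
        ∑ s ∈ Finset.Icc 1 t, (-(η * ∫ w, c s w ∂Pstar) - Real.log (Z s)) := by
    intro t
    induction t with
    | zero =>
      intro _
      refine ⟨fun _ => 1, measurable_const, ⟨1, 1, one_pos, fun w => ⟨le_refl _, le_refl _⟩⟩, ?_, ?_, ?_⟩
      · rw [hP1]
        simp
      · rw [hP1]; infer_instance
      · simp
    | succ t ih =>
      intro hle
      obtain ⟨g, hgmeas, ⟨a, b, ha, hab⟩, hrep, hprob, hsum⟩ := ih (by omega)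
      haveI := hprob
      obtain ⟨B, hB⟩ := hcbdd (t + 1)
      have hcint' : Integrable (c (t + 1)) (P (t + 1)) := integrable_of_bdd (hcmeas _) hB
      have hexpbd : ∀ w, |Real.exp (-η * c (t + 1) w)| ≤ Real.exp (|η| * B) := by
        intro w
        rw [abs_of_pos (Real.exp_pos _)]
        exact (exp_bdd (hB w)).2
      have hexpmeas : Measurable fun w => Real.exp (-η * c (t + 1) w) := by fun_prop
      have hexpint : Integrable (fun w => Real.exp (-η * c (t + 1) w)) (P (t + 1)) :=
        integrable_of_bdd hexpmeas hexpbd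
      have hZpos : 0 < Z (t + 1) := by
        have h1 : ∫ _w, Real.exp (-(|η| * B)) ∂(P (t + 1)) ≤ Z (t + 1) :=
          integral_mono (integrable_const _) hexpint (fun w => (exp_bdd (hB w)).1)
        have h2 : ∫ _w, Real.exp (-(|η| * B)) ∂(P (t + 1)) = Real.exp (-(|η| * B)) := by simp
        rw [h2] at h1
        exact lt_of_lt_of_le (Real.exp_pos _) h1
      set d : 𝒲 → ℝ := fun w => Real.exp (-η * c (t + 1) w) / Z (t + 1) with hd_def
      have hdmeas : Measurable d := hexpmeas.div_const _
      have hdpos : ∀ w, 0 < d w := fun w => div_pos (Real.exp_pos _) hZpos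
      have hdbd : ∀ w, Real.exp (-(|η| * B)) / Z (t + 1) ≤ d w ∧
          d w ≤ Real.exp (|η| * B) / Z (t + 1) := by
        intro w
        constructor
        · exact div_le_div_of_nonneg_right (exp_bdd (hB w)).1 hZpos.le
        · exact div_le_div_of_nonneg_right (exp_bdd (hB w)).2 hZpos.le
      have hdint : Integrable d (P (t + 1)) := hexpint.div_const _
      have hrec : P (t + 1 + 1) = (P (t + 1)).withDensity (fun w => ENNReal.ofReal (d w)) := by
        exact hPrec (t + 1) (Finset.mem_Icc.2 ⟨Nat.le_add_left 1 t, hle⟩)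
      -- P (t+2) is a probability measure
      have hdint1 : ∫ w, d w ∂(P (t + 1)) = 1 := by
        rw [hd_def]
        simp only []
        rw [integral_div]
        exact div_self hZpos.ne'
      have hmass2 : ∫⁻ w, ENNReal.ofReal (d w) ∂(P (t + 1)) = 1 := by
        rw [← ofReal_integral_eq_lintegral_ofReal hdint
          (Filter.Eventually.of_forall (fun w => (hdpos w).le)), hdint1]
        simp
      have hprob2 : IsProbabilityMeasure (P (t + 1 + 1)) := by
        constructor
        rw [hrec, withDensity_apply _ MeasurableSet.univ, Measure.restrict_univ, hmass2]
      -- representation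
      refine ⟨fun w => g w * d w, hgmeas.mul hdmeas,
        ⟨a * (Real.exp (-(|η| * B)) / Z (t + 1)), b * (Real.exp (|η| * B) / Z (t + 1)), ?_, ?_⟩,
        ?_, hprob2, ?_⟩
      · exact mul_pos ha (div_pos (Real.exp_pos _) hZpos)
      · intro w
        have hgw := hab w
        have hdw := hdbd w
        constructor
        · exact mul_le_mul hgw.1 hdw.1 (div_nonneg (Real.exp_pos _).le hZpos.le)
            (le_trans ha.le hgw.1)
        · exact mul_le_mul hgw.2 hdw.2 (hdpos w).le (le_trans (le_trans ha.le hgw.1) hgw.2)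
      · -- representation of P (t+2) over P₁
        rw [hrec, hrep]
        rw [← withDensity_mul _ hgmeas.ennreal_ofReal hdmeas.ennreal_ofReal]
        congr 1
        funext w
        exact (ENNReal.ofReal_mul (le_trans ha.le (hab w).1)).symm
      · -- integral of log
        have hloggbd : ∀ w, |Real.log (g w)| ≤ max |Real.log a| |Real.log b| := by
          intro w
          have hgw := hab w
          have hgpos : 0 < g w := lt_of_lt_of_le ha hgw.1
          rcases le_or_gt 0 (Real.log (g w)) with h | h
          · rw [abs_of_nonneg h]
            exact le_max_of_le_right (le_trans (Real.log_le_log hgpos hgw.2) (le_abs_self _))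
          · rw [abs_of_neg h]
            refine le_max_of_le_left ?_
            have h2 := Real.log_le_log ha hgw.1
            rw [← abs_neg]
            exact le_trans (neg_le_neg h2) (le_abs_self _)
        have hloggint : Integrable (fun w => Real.log (g w)) Pstar :=
          integrable_of_bdd hgmeas.log hloggbd
        have hlogd : ∀ w, Real.log (g w * d w) =
            Real.log (g w) + (-(η * c (t + 1) w) - Real.log (Z (t + 1))) := by
          intro w
          have hgpos : 0 < g w := lt_of_lt_of_le ha (hab w).1
          rw [Real.log_mul hgpos.ne' (hdpos w).ne', hd_def]
          simp only []
          rw [Real.log_div (Real.exp_ne_zero _) hZpos.ne', Real.log_exp]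
          ring
        have hcintP : Integrable (c (t + 1)) Pstar := integrable_of_bdd (hcmeas _) hB
        have : ∫ w, Real.log (g w * d w) ∂Pstar
            = (∫ w, Real.log (g w) ∂Pstar) + (-(η * ∫ w, c (t + 1) w ∂Pstar) - Real.log (Z (t + 1))) := by
          have h2a : Integrable (fun w => -(η * c (t + 1) w)) Pstar :=
            (hcintP.const_mul η).neg
          have h2 : Integrable (fun w => -(η * c (t + 1) w) - Real.log (Z (t + 1))) Pstar :=
            h2a.sub (integrable_const _)
          simp only [hlogd]
          rw [integral_add hloggint h2]
          congr 1
          rw [integral_sub h2a (integrable_const _)]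
          rw [integral_neg, integral_const_mul, integral_const]
          simp
        rw [this, hsum, Finset.sum_Icc_succ_top (Nat.le_add_left 1 t)]
  -- done with induction; final assembly
  obtain ⟨g, hgmeas, ⟨a, b, ha, hab⟩, hrep, hprobN, hsum⟩ := key n le_rfl
  haveI := hprobN
  have hmass : ∫⁻ w, ENNReal.ofReal (g w) ∂P₁ ≤ 1 := by
    have h1 : P (n + 1) Set.univ = 1 := measure_univ
    rw [hrep, withDensity_apply _ MeasurableSet.univ, Measure.restrict_univ] at h1
    exact le_of_eq h1
  have hgibbs : ∑ s ∈ Finset.Icc 1 n, (-(η * ∫ w, c s w ∂Pstar) - Real.log (Z s))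
      ≤ ∫ w, Real.log ((Pstar.rnDeriv P₁ w).toReal) ∂Pstar := by
    rw [← hsum]
    exact gibbs P₁ Pstar hac hKLfin g hgmeas a b ha hab hmass
  -- per-step Hoeffding bound
  have hstep : ∀ t ∈ Finset.Icc 1 n,
      η * ((∫ w, c t w ∂(P t)) - ∫ w, c t w ∂Pstar)
        ≤ (-(η * ∫ w, c t w ∂Pstar) - Real.log (Z t)) + η ^ 2 / 2 * (⨆ w, |c t w|) ^ 2 := by
    intro t ht
    obtain ⟨ht1, ht2⟩ := Finset.mem_Icc.1 ht
    -- P t is a probability measure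
    obtain ⟨_, _, _, _, hprobt, _⟩ := key (t - 1) (by omega)
    have htt : t - 1 + 1 = t := by omega
    rw [htt] at hprobt
    haveI := hprobt
    obtain ⟨B0, hB0⟩ := hcbdd t
    have hbdd : BddAbove (Set.range fun w => |c t w|) := by
      refine ⟨B0, ?_⟩
      rintro x ⟨w, rfl⟩
      exact hB0 w
    have hBt : ∀ w, |c t w| ≤ ⨆ w, |c t w| := fun w => le_ciSup hbdd w
    have hmgf := mgf_bound (P t) (c t) (hcmeas t) _ hBt (-η)
    have hexpbd : ∀ w, |Real.exp (-η * c t w)| ≤ Real.exp (|η| * B0) := by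
      intro w
      rw [abs_of_pos (Real.exp_pos _)]
      exact (exp_bdd (hB0 w)).2
    have hexpmeas : Measurable fun w => Real.exp (-η * c t w) := by fun_prop
    have hexpint : Integrable (fun w => Real.exp (-η * c t w)) (P t) :=
      integrable_of_bdd hexpmeas hexpbd
    have hZpos : 0 < Z t := by
      have h1 : ∫ _w, Real.exp (-(|η| * B0)) ∂(P t) ≤ Z t :=
        integral_mono (integrable_const _) hexpint (fun w => (exp_bdd (hB0 w)).1)
      have h2 : ∫ _w, Real.exp (-(|η| * B0)) ∂(P t) = Real.exp (-(|η| * B0)) := by simp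
      rw [h2] at h1
      exact lt_of_lt_of_le (Real.exp_pos _) h1
    have hmgf' : Z t ≤ Real.exp (-η * (∫ w, c t w ∂(P t)) + η ^ 2 * (⨆ w, |c t w|) ^ 2 / 2) := by
      have hsq : (-η) ^ 2 = η ^ 2 := by ring
      rw [hZ_def]
      simp only []
      calc ∫ w', Real.exp (-η * c t w') ∂(P t) ≤
          Real.exp ((-η) * (∫ w, c t w ∂(P t)) + (-η) ^ 2 * (⨆ w, |c t w|) ^ 2 / 2) := hmgf
      _ = _ := by rw [hsq]
    have hlogZ : Real.log (Z t) ≤ -η * (∫ w, c t w ∂(P t)) + η ^ 2 * (⨆ w, |c t w|) ^ 2 / 2 := by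
      calc Real.log (Z t) ≤ Real.log (Real.exp (-η * (∫ w, c t w ∂(P t))
          + η ^ 2 * (⨆ w, |c t w|) ^ 2 / 2)) := Real.log_le_log hZpos hmgf'
      _ = _ := Real.log_exp _
    nlinarith [hlogZ]
  -- sum everything
  have hsum_le : η * ∑ t ∈ Finset.Icc 1 n, ((∫ w, c t w ∂(P t)) - ∫ w, c t w ∂Pstar)
      ≤ (∫ w, Real.log ((Pstar.rnDeriv P₁ w).toReal) ∂Pstar)
        + η ^ 2 / 2 * ∑ t ∈ Finset.Icc 1 n, (⨆ w, |c t w|) ^ 2 := by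
    rw [Finset.mul_sum]
    calc ∑ t ∈ Finset.Icc 1 n, η * ((∫ w, c t w ∂(P t)) - ∫ w, c t w ∂Pstar)
        ≤ ∑ t ∈ Finset.Icc 1 n, ((-(η * ∫ w, c t w ∂Pstar) - Real.log (Z t))
          + η ^ 2 / 2 * (⨆ w, |c t w|) ^ 2) := Finset.sum_le_sum hstep
    _ = (∑ t ∈ Finset.Icc 1 n, (-(η * ∫ w, c t w ∂Pstar) - Real.log (Z t)))
          + η ^ 2 / 2 * ∑ t ∈ Finset.Icc 1 n, (⨆ w, |c t w|) ^ 2 := by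
        rw [Finset.sum_add_distrib, Finset.mul_sum]
    _ ≤ _ := by
        apply add_le_add_left hgibbs
  rw [← mul_le_mul_iff_right₀ hη]
  have heq : η * ((∫ w, Real.log ((Pstar.rnDeriv P₁ w).toReal) ∂Pstar) / η
      + η / 2 * ∑ t ∈ Finset.Icc 1 n, (⨆ w, |c t w|) ^ 2)
      = (∫ w, Real.log ((Pstar.rnDeriv P₁ w).toReal) ∂Pstar)
        + η ^ 2 / 2 * ∑ t ∈ Finset.Icc 1 n, (⨆ w, |c t w|) ^ 2 := by
    field_simp
  rw [heq]
  exact hsum_le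
end

section
/- Regret bound for follow-the-regularized-leader: let V be a real normed vector space, D ⊆ V a nonempty convex set, α > 0, and h : D → ℝ an α-strongly convex function on D with respect to the norm, i.e. h(λP + (1−λ)P') ≤ λh(P) + (1−λ)h(P') − (αλ(1−λ)/2)·‖P − P'‖² for all P, P' ∈ D and λ ∈ [0,1]. Let c_1,…,c_n ∈ V* be continuous linear functionals, let η > 0, and suppose P_1 ∈ D minimizes h over D and, for each t ∈ {1,…,n}, P_{t+1} ∈ D minimizes P ↦ Σ_{s=1}^t c_s(P) + h(P)/η over D. Then for every P* ∈ D: Σ_{t=1}^n (c_t(P_t) − c_t(P*)) ≤ (h(P*) − h(P_1))/η + (η/(2α))·Σ_{t=1}^n ‖c_t‖_*², where ‖·‖_* is the dual (operator) norm on V*. -/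
set_option autoImplicit false

open Filter Topology

lemma strongConvex_min_aux
    {V : Type*} [NormedAddCommGroup V] [NormedSpace ℝ V]
    (D : Set V) (hDconv : Convex ℝ D)
    (β : ℝ) (G : V → ℝ)
    (hsc : ∀ P ∈ D, ∀ P' ∈ D, ∀ l : ℝ, l ∈ Set.Icc (0 : ℝ) 1 →
      G (l • P + (1 - l) • P') ≤ l * G P + (1 - l) * G P'
        - β * l * (1 - l) / 2 * ‖P - P'‖ ^ 2)
    (x : V) (hx : x ∈ D) (hmin : ∀ v ∈ D, G x ≤ G v)
    (y : V) (hy : y ∈ D) :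
    G x + β / 2 * ‖y - x‖ ^ 2 ≤ G y := by
  have key : ∀ l ∈ Set.Ioc (0 : ℝ) 1, β * (1 - l) / 2 * ‖y - x‖ ^ 2 ≤ G y - G x := by
    intro l hl
    have hmem : l • y + (1 - l) • x ∈ D :=
      hDconv hy hx hl.1.le (by linarith [hl.2]) (by ring)
    have h1 := hsc y hy x hx l ⟨hl.1.le, hl.2⟩
    have h2 := hmin _ hmem
    nlinarith [hl.1, sq_nonneg ‖y - x‖]
  have h2 : Tendsto (fun l : ℝ => β * (1 - l) / 2 * ‖y - x‖ ^ 2) (𝓝[>] (0:ℝ))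
      (𝓝 (β / 2 * ‖y - x‖ ^ 2)) := by
    have : Continuous (fun l : ℝ => β * (1 - l) / 2 * ‖y - x‖ ^ 2) := by continuity
    have ht := this.tendsto 0
    simp only [sub_zero, mul_one] at ht
    exact ht.mono_left nhdsWithin_le_nhds
  have h3 : ∀ᶠ l in 𝓝[>] (0:ℝ), β * (1 - l) / 2 * ‖y - x‖ ^ 2 ≤ G y - G x := by
    filter_upwards [Ioc_mem_nhdsGT_of_mem (by norm_num : (0:ℝ) ∈ Set.Ico (0:ℝ) 1)] with l hl
    exact key l hl
  have := le_of_tendsto h2 h3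
  linarith

/-- **Regret bound for follow-the-regularized-leader.** Let `V` be a real normed vector
space, `D ⊆ V` nonempty convex, `α > 0`, and `h : V → ℝ` `α`-strongly convex on `D`.
Let `c 1, …, c n ∈ V*` be continuous linear functionals, `η > 0`, suppose `P 1 ∈ D`
minimizes `h` over `D` and each `P (t+1) ∈ D` minimizes `P ↦ ∑_{s≤t} c s P + h P / η`
over `D`. Then for every `P* ∈ D`,
`∑ₜ (c t (P t) − c t P*) ≤ (h P* − h (P 1))/η + (η/(2α)) ∑ₜ ‖c t‖²`. -/
theorem regret_bound_FTRL
    {V : Type*} [NormedAddCommGroup V] [NormedSpace ℝ V]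
    (D : Set V) (hDne : D.Nonempty) (hDconv : Convex ℝ D)
    (α : ℝ) (hα : 0 < α)
    (h : V → ℝ)
    (hstrong : ∀ P ∈ D, ∀ P' ∈ D, ∀ l : ℝ, l ∈ Set.Icc (0 : ℝ) 1 →
      h (l • P + (1 - l) • P') ≤ l * h P + (1 - l) * h P'
        - α * l * (1 - l) / 2 * ‖P - P'‖ ^ 2)
    (n : ℕ) (c : ℕ → V →L[ℝ] ℝ) (η : ℝ) (hη : 0 < η)
    (P : ℕ → V) (hPmem : ∀ t ∈ Finset.Icc 1 (n + 1), P t ∈ D)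
    (hP1min : ∀ v ∈ D, h (P 1) ≤ h v)
    (hPmin : ∀ t ∈ Finset.Icc 1 n, ∀ v ∈ D,
      (∑ s ∈ Finset.Icc 1 t, c s (P (t + 1))) + h (P (t + 1)) / η
        ≤ (∑ s ∈ Finset.Icc 1 t, c s v) + h v / η)
    (Pstar : V) (hPstar : Pstar ∈ D) :
    ∑ t ∈ Finset.Icc 1 n, (c t (P t) - c t Pstar)
      ≤ (h Pstar - h (P 1)) / η + η / (2 * α) * ∑ t ∈ Finset.Icc 1 n, ‖c t‖ ^ 2 := by
  set F : ℕ → V → ℝ := fun m v => (∑ s ∈ Finset.Icc 1 m, c s v) + h v / η with hF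
  -- each F m is (α/η)-strongly convex on D
  have hFsc : ∀ m, ∀ Q ∈ D, ∀ Q' ∈ D, ∀ l : ℝ, l ∈ Set.Icc (0 : ℝ) 1 →
      F m (l • Q + (1 - l) • Q') ≤ l * F m Q + (1 - l) * F m Q'
        - (α / η) * l * (1 - l) / 2 * ‖Q - Q'‖ ^ 2 := by
    intro m Q hQ Q' hQ' l hl
    have hh := hstrong Q hQ Q' hQ' l hl
    have hlin : (∑ s ∈ Finset.Icc 1 m, c s (l • Q + (1 - l) • Q'))
        = l * (∑ s ∈ Finset.Icc 1 m, c s Q) + (1 - l) * (∑ s ∈ Finset.Icc 1 m, c s Q') := by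
      rw [Finset.mul_sum, Finset.mul_sum, ← Finset.sum_add_distrib]
      refine Finset.sum_congr rfl fun s _ => ?_
      simp [map_add, map_smul, smul_eq_mul]
    have hdiv : h (l • Q + (1 - l) • Q') / η
        ≤ (l * h Q + (1 - l) * h Q' - α * l * (1 - l) / 2 * ‖Q - Q'‖ ^ 2) / η :=
      div_le_div_of_nonneg_right hh hη.le |>.trans_eq rfl
    simp only [hF]
    rw [hlin]
    have : (l * h Q + (1 - l) * h Q' - α * l * (1 - l) / 2 * ‖Q - Q'‖ ^ 2) / η
        = l * (h Q / η) + (1 - l) * (h Q' / η) - (α / η) * l * (1 - l) / 2 * ‖Q - Q'‖ ^ 2 := by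
      field_simp
    rw [this] at hdiv
    linarith
  -- memberships
  have hPm : ∀ m, m ≤ n → P (m + 1) ∈ D := by
    intro m hm
    exact hPmem (m + 1) (Finset.mem_Icc.mpr ⟨Nat.le_add_left 1 m, by omega⟩)
  -- minimizers
  have hFmin : ∀ m, m ≤ n → ∀ v ∈ D, F m (P (m + 1)) ≤ F m v := by
    intro m hm v hv
    rcases Nat.eq_zero_or_pos m with rfl | hm0
    · simp only [hF, Finset.Icc_eq_empty_of_lt (by norm_num : (1:ℕ) > 0), Finset.sum_empty,
        zero_add]
      exact div_le_div_of_nonneg_right (hP1min v hv) hη.le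
    · exact hPmin m (Finset.mem_Icc.mpr ⟨hm0, hm⟩) v hv
  -- main induction
  have key : ∀ m, m ≤ n →
      ∑ t ∈ Finset.Icc 1 m, c t (P t)
        ≤ F m (P (m + 1)) - h (P 1) / η + η / (2 * α) * ∑ t ∈ Finset.Icc 1 m, ‖c t‖ ^ 2 := by
    intro m
    induction m with
    | zero =>
      intro _
      simp [hF, Finset.Icc_eq_empty_of_lt (by norm_num : (1:ℕ) > 0)]
    | succ m ih =>
      intro hm1
      have hm : m ≤ n := Nat.le_of_succ_le hm1
      have ihm := ih hm
      -- step : F (m+1) (P (m+1)) ≤ F (m+1) (P (m+2)) + η/(2α) * ‖c (m+1)‖^2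
      have hstep : F (m + 1) (P (m + 1)) ≤ F (m + 1) (P (m + 2)) + η / (2 * α) * ‖c (m + 1)‖ ^ 2 := by
        have hmem1 : P (m + 1) ∈ D := hPm m hm
        have hmem2 : P (m + 2) ∈ D := by
          have := hPmem (m + 2) (Finset.mem_Icc.mpr ⟨by omega, by omega⟩)
          exact this
        have hsc := strongConvex_min_aux D hDconv (α / η) (F m) (hFsc m)
          (P (m + 1)) hmem1 (hFmin m hm) (P (m + 2)) hmem2
        -- F m (P(m+1)) + (α/η)/2 ‖P(m+2) - P(m+1)‖² ≤ F m (P(m+2))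
        have hexp : ∀ v, F (m + 1) v = F m v + c (m + 1) v := by
          intro v
          simp only [hF]
          rw [Finset.sum_Icc_succ_top (by omega : 1 ≤ m + 1)]
          ring
        rw [hexp, hexp]
        have hopn : c (m + 1) (P (m + 1)) - c (m + 1) (P (m + 2))
            ≤ ‖c (m + 1)‖ * ‖P (m + 2) - P (m + 1)‖ := by
          have h1 : c (m + 1) (P (m + 1)) - c (m + 1) (P (m + 2))
              = c (m + 1) (P (m + 1) - P (m + 2)) := by rw [map_sub]
          rw [h1, norm_sub_rev]
          exact le_trans (le_abs_self _) ((c (m + 1)).le_opNorm _)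
        set a := ‖P (m + 2) - P (m + 1)‖ with ha
        set C := ‖c (m + 1)‖ with hC
        have ha0 : 0 ≤ a := norm_nonneg _
        have hC0 : 0 ≤ C := norm_nonneg _
        -- from hsc : F m (P(m+1)) + (α/η)/2 * a² ≤ F m (P(m+2))
        -- need : F m (P(m+1)) + c(m+1)(P(m+1)) ≤ F m (P(m+2)) + c(m+1)(P(m+2)) + η/(2α) C²
        have hquad : C * a - (α / η) / 2 * a ^ 2 ≤ η / (2 * α) * C ^ 2 := by
          have hpos : (0:ℝ) < 2 * α * η := by positivity
          have heq : η / (2 * α) * C ^ 2 - (C * a - (α / η) / 2 * a ^ 2)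
              = (α * a - η * C) ^ 2 / (2 * α * η) := by
            field_simp
            ring
          have hnn : 0 ≤ (α * a - η * C) ^ 2 / (2 * α * η) :=
            div_nonneg (sq_nonneg _) hpos.le
          linarith [heq ▸ hnn]
        linarith [hsc, hopn, hquad]
      calc ∑ t ∈ Finset.Icc 1 (m + 1), c t (P t)
          = (∑ t ∈ Finset.Icc 1 m, c t (P t)) + c (m + 1) (P (m + 1)) :=
            Finset.sum_Icc_succ_top (by omega) _
        _ ≤ F m (P (m + 1)) + c (m + 1) (P (m + 1)) - h (P 1) / η
              + η / (2 * α) * ∑ t ∈ Finset.Icc 1 m, ‖c t‖ ^ 2 := by linarith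
        _ = F (m + 1) (P (m + 1)) - h (P 1) / η
              + η / (2 * α) * ∑ t ∈ Finset.Icc 1 m, ‖c t‖ ^ 2 := by
            simp only [hF]
            rw [Finset.sum_Icc_succ_top (by omega : 1 ≤ m + 1)]
            ring
        _ ≤ F (m + 1) (P (m + 2)) - h (P 1) / η
              + η / (2 * α) * ∑ t ∈ Finset.Icc 1 (m + 1), ‖c t‖ ^ 2 := by
            rw [Finset.sum_Icc_succ_top (by omega : 1 ≤ m + 1)]
            have hη2α : 0 ≤ η / (2 * α) := by positivity
            nlinarith [hstep, mul_nonneg hη2α (sq_nonneg ‖c (m + 1)‖)]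
  have hfin := key n le_rfl
  have hminP := hFmin n le_rfl Pstar hPstar
  have hsplit : ∑ t ∈ Finset.Icc 1 n, (c t (P t) - c t Pstar)
      = (∑ t ∈ Finset.Icc 1 n, c t (P t)) - ∑ t ∈ Finset.Icc 1 n, c t Pstar :=
    Finset.sum_sub_distrib _ _
  simp only [hF] at hfin hminP
  rw [hsplit]
  have hd : (h Pstar - h (P 1)) / η = h Pstar / η - h (P 1) / η := sub_div _ _ _
  linarith
end
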